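/- arXiv:1705.02247 — 4 statements merged into one kernel-verified Lean document; each statement's English description precedes it below -/
import Mathlib

section
/- Let P be a PMF on a finite set X, let M be a positive integer, let f : X → {1,…,M}, let L(x) = |{x' ∈ X : f(x') = f(x)}|, and let ρ > 0 with ρ̃ = 1/(1+ρ). Then E[L(X)^ρ] ≥ 2^{ρ·[H_{ρ̃}(P) − log₂ M]}, i.e., the ρ-th moment of the list size is at least 2 raised to ρ times the difference between the Rényi entropy of order 1/(1+ρ) of P and log₂ M. -/
/-- `P` is a probability mass function on the finite type `X`. -/
def IsPMF {X : Type*} [Fintype X] (P : X → ℝ) : Prop :=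
  (∀ x, 0 ≤ P x) ∧ ∑ x, P x = 1

/-- Rényi entropy of order `α` (base-2 logarithm). -/
noncomputable def renyiEntropy {X : Type*} [Fintype X] (α : ℝ) (P : X → ℝ) : ℝ :=
  (1 - α)⁻¹ * Real.logb 2 (∑ x, P x ^ α)

/-- The list size of `x` under encoder `f`. -/
noncomputable def listSize {X : Type*} [Fintype X] {M : ℕ} (f : X → Fin M) (x : X) : ℕ :=
  (Finset.univ.filter (fun x' => f x' = f x)).card

/-- `E[L(X)^ρ] ≥ 2^{ρ·[H_{1/(1+ρ)}(P) − log₂ M]}`. -/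
theorem rho_moment_listSize_ge
    {X : Type*} [Fintype X] {M : ℕ} (hM : 0 < M) (f : X → Fin M)
    (P : X → ℝ) (hP : IsPMF P) (ρ : ℝ) (hρ : 0 < ρ) :
    ∑ x, P x * (listSize f x : ℝ) ^ ρ ≥
      (2 : ℝ) ^ (ρ * (renyiEntropy (1 / (1 + ρ)) P - Real.logb 2 (M : ℝ))) := by
  obtain ⟨hP0, hP1⟩ := hP
  have hp0 : (0:ℝ) < 1 + ρ := by linarith
  have hMpos : (0:ℝ) < (M : ℝ) := by exact_mod_cast hM
  have hLpos : ∀ x : X, (0:ℝ) < (listSize f x : ℝ) := by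
    intro x
    have : 0 < listSize f x := Finset.card_pos.2 ⟨x, by simp [listSize]⟩
    exact_mod_cast this
  set S := ∑ x, P x * (listSize f x : ℝ) ^ ρ with hSdef
  set Q := ∑ x, P x ^ (1 / (1 + ρ)) with hQdef
  have hSnn : 0 ≤ S := Finset.sum_nonneg fun x _ =>
    mul_nonneg (hP0 x) (Real.rpow_nonneg (hLpos x).le _)
  obtain ⟨x₀, hx₀⟩ : ∃ x, 0 < P x := by
    by_contra h
    push_neg at h
    have : ∑ x, P x ≤ 0 := Finset.sum_nonpos fun x _ => h x
    rw [hP1] at this; linarith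
  have hQpos : 0 < Q := by
    have h1 : P x₀ ^ (1 / (1 + ρ)) ≤ Q :=
      Finset.single_le_sum (fun x _ => Real.rpow_nonneg (hP0 x) _) (Finset.mem_univ x₀)
    have h2 : 0 < P x₀ ^ (1 / (1 + ρ)) := Real.rpow_pos_of_pos hx₀ _
    linarith
  have hTnn : 0 ≤ ∑ x : X, ((listSize f x : ℝ))⁻¹ :=
    Finset.sum_nonneg fun x _ => (inv_nonneg).2 (hLpos x).le
  -- T = sum of inverses of list sizes is at most M
  have hT : ∑ x : X, ((listSize f x : ℝ))⁻¹ ≤ (M : ℝ) := by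
    rw [← Finset.sum_fiberwise Finset.univ f (fun x => ((listSize f x : ℝ))⁻¹)]
    calc ∑ m : Fin M, ∑ x ∈ Finset.univ.filter (fun x => f x = m),
            ((listSize f x : ℝ))⁻¹ ≤ ∑ _m : Fin M, (1:ℝ) := by
          refine Finset.sum_le_sum fun m _ => ?_
          set s := Finset.univ.filter (fun x => f x = m) with hs
          have hls : ∀ x ∈ s, ((listSize f x : ℝ))⁻¹ = ((s.card : ℝ))⁻¹ := by
            intro x hx
            have hfx : f x = m := (Finset.mem_filter.1 hx).2
            have : listSize f x = s.card := by
              unfold listSize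
              rw [hs]
              congr 1
              ext x'
              simp [hfx]
            rw [this]
          rw [Finset.sum_congr rfl hls, Finset.sum_const, nsmul_eq_mul]
          rcases Nat.eq_zero_or_pos s.card with h | h
          · simp [h]
          · have : (s.card : ℝ) ≠ 0 := by positivity
            rw [mul_inv_cancel₀ this]
      _ = (M : ℝ) := by simp
  -- Hölder's inequality
  have hconj : Real.HolderConjugate (1 + ρ) ((1 + ρ) / ρ) := by
    rw [Real.holderConjugate_iff]
    constructor
    · linarith
    · rw [inv_div]
      field_simp <;> ring
  have hHolder : Q ≤ S ^ (1 / (1 + ρ)) * (∑ x : X, ((listSize f x : ℝ))⁻¹) ^ (ρ / (1 + ρ)) := by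
    have key := Real.inner_le_Lp_mul_Lq_of_nonneg Finset.univ hconj
      (f := fun x => (P x * (listSize f x : ℝ) ^ ρ) ^ (1 / (1 + ρ)))
      (g := fun x => ((listSize f x : ℝ)) ^ (-(ρ / (1 + ρ))))
      (fun x _ => Real.rpow_nonneg (mul_nonneg (hP0 x) (Real.rpow_nonneg (hLpos x).le _)) _)
      (fun x _ => Real.rpow_nonneg (hLpos x).le _)
    have e1 : ∀ x : X, (P x * (listSize f x : ℝ) ^ ρ) ^ (1 / (1 + ρ)) *
        ((listSize f x : ℝ)) ^ (-(ρ / (1 + ρ))) = P x ^ (1 / (1 + ρ)) := by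
      intro x
      rw [Real.mul_rpow (hP0 x) (Real.rpow_nonneg (hLpos x).le _),
        ← Real.rpow_mul (hLpos x).le, mul_assoc, ← Real.rpow_add (hLpos x)]
      have : ρ * (1 / (1 + ρ)) + -(ρ / (1 + ρ)) = 0 := by field_simp; ring
      rw [this, Real.rpow_zero, mul_one]
    have e2 : ∀ x : X, ((P x * (listSize f x : ℝ) ^ ρ) ^ (1 / (1 + ρ))) ^ (1 + ρ) =
        P x * (listSize f x : ℝ) ^ ρ := by
      intro x
      rw [← Real.rpow_mul (mul_nonneg (hP0 x) (Real.rpow_nonneg (hLpos x).le _)),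
        one_div_mul_cancel hp0.ne', Real.rpow_one]
    have e3 : ∀ x : X, (((listSize f x : ℝ)) ^ (-(ρ / (1 + ρ)))) ^ ((1 + ρ) / ρ) =
        ((listSize f x : ℝ))⁻¹ := by
      intro x
      rw [← Real.rpow_mul (hLpos x).le]
      have : -(ρ / (1 + ρ)) * ((1 + ρ) / ρ) = -1 := by field_simp <;> ring
      rw [this, Real.rpow_neg_one]
    have e4 : 1 / ((1 + ρ) / ρ) = ρ / (1 + ρ) := one_div_div _ _
    simp only [e1, e2, e3, e4] at key
    exact key
  -- combine: Q ≤ S^(1/(1+ρ)) * M^(ρ/(1+ρ))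
  have hQle : Q ≤ S ^ (1 / (1 + ρ)) * (M : ℝ) ^ (ρ / (1 + ρ)) := by
    refine hHolder.trans ?_
    exact mul_le_mul_of_nonneg_left
      (Real.rpow_le_rpow hTnn hT (by positivity)) (Real.rpow_nonneg hSnn _)
  -- raise to the power (1+ρ)
  have hQpow : Q ^ (1 + ρ) ≤ S * (M : ℝ) ^ ρ := by
    have h1 : Q ^ (1 + ρ) ≤ (S ^ (1 / (1 + ρ)) * (M : ℝ) ^ (ρ / (1 + ρ))) ^ (1 + ρ) :=
      Real.rpow_le_rpow hQpos.le hQle hp0.le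
    refine h1.trans_eq ?_
    rw [Real.mul_rpow (Real.rpow_nonneg hSnn _) (Real.rpow_nonneg hMpos.le _),
      ← Real.rpow_mul hSnn, ← Real.rpow_mul hMpos.le,
      one_div_mul_cancel hp0.ne', Real.rpow_one]
    congr 2
    field_simp
  -- rewrite the RHS as Q^(1+ρ) / M^ρ
  have hRHS : (2 : ℝ) ^ (ρ * (renyiEntropy (1 / (1 + ρ)) P - Real.logb 2 (M : ℝ))) =
      Q ^ (1 + ρ) / (M : ℝ) ^ ρ := by
    have ha : (1 : ℝ) - 1 / (1 + ρ) = ρ / (1 + ρ) := by field_simp; ring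
    have hexp : ρ * (renyiEntropy (1 / (1 + ρ)) P - Real.logb 2 (M : ℝ)) =
        Real.logb 2 Q * (1 + ρ) - Real.logb 2 (M : ℝ) * ρ := by
      unfold renyiEntropy
      rw [ha, ← hQdef]
      have : (ρ / (1 + ρ))⁻¹ = (1 + ρ) / ρ := by rw [inv_div]
      rw [this]
      field_simp <;> ring
    rw [hexp, Real.rpow_sub (by norm_num : (0:ℝ) < 2),
      Real.rpow_mul (by norm_num : (0:ℝ) ≤ 2), Real.rpow_mul (by norm_num : (0:ℝ) ≤ 2),
      Real.rpow_logb (by norm_num) (by norm_num) hQpos,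
      Real.rpow_logb (by norm_num) (by norm_num) hMpos]
  rw [ge_iff_le, hRHS, div_le_iff₀ (Real.rpow_pos_of_pos hMpos ρ)]
  exact hQpow
end

section
/- Let P_{XY} be a joint PMF on the finite set X × Y, let f : X → {1,…,M_X} and g : Y → {1,…,M_Y}, let L(x,y) = |{(x',y') ∈ X × Y : f(x') = f(x) ∧ g(y') = g(y)}|, and let ρ > 0 with ρ̃ = 1/(1+ρ). Then E[L(X,Y)^ρ] ≥ 2^{ρ·[H_{ρ̃}(P_{XY}) + K_{ρ̃}(X;Y) − log₂(M_X·M_Y)]}, where the expectation is with respect to (X,Y) ~ P_{XY}. -/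
/-- Relative `α`-entropy `Δ_α(P‖Q)` (base-2 logarithm). -/
noncomputable def relAlphaEntropy {X : Type*} [Fintype X] (α : ℝ) (P Q : X → ℝ) : ℝ :=
  (α / (1 - α)) * Real.logb 2 (∑ x, P x * Q x ^ (α - 1))
    + Real.logb 2 (∑ x, Q x ^ α)
    - (1 - α)⁻¹ * Real.logb 2 (∑ x, P x ^ α)

/-- The dependence measure `K_α(X;Y)`: the minimum of `Δ_α(P_{XY}‖Q_X Q_Y)` over all PMFs
`Q_X` and `Q_Y`.  (Restricting to everywhere-positive `Q_X`, `Q_Y` gives the same value,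
since by the convention `p/0 = ∞` any `Q` vanishing on the support of `P` yields an
infinite relative entropy, and `Δ_α` is continuous in positive `Q`.) -/
noncomputable def Kdep {X Y : Type*} [Fintype X] [Fintype Y] (α : ℝ) (P : X × Y → ℝ) : ℝ :=
  sInf {r : ℝ | ∃ QX : X → ℝ, ∃ QY : Y → ℝ, IsPMF QX ∧ IsPMF QY ∧
    (∀ x, 0 < QX x) ∧ (∀ y, 0 < QY y) ∧
    r = relAlphaEntropy α P (fun p => QX p.1 * QY p.2)}

/-- The joint list size of `(x,y)` under the encoders `f` and `g`. -/
noncomputable def jointListSize {X Y : Type*} [Fintype X] [Fintype Y] {MX MY : ℕ}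
    (f : X → Fin MX) (g : Y → Fin MY) (x : X) (y : Y) : ℕ :=
  (Finset.univ.filter (fun p : X × Y => f p.1 = f x ∧ g p.2 = g y)).card

/- ------------------- auxiliary lemmas ------------------- -/

lemma pmf_le_one' {Z : Type*} [Fintype Z] {Q : Z → ℝ} (h0 : ∀ z, 0 ≤ Q z)
    (h1 : ∑ z, Q z = 1) (z : Z) : Q z ≤ 1 :=
  h1 ▸ Finset.single_le_sum (fun i _ => h0 i) (Finset.mem_univ z)

lemma sum_prod_fun {X Y : Type*} [Fintype X] [Fintype Y] (u : X → ℝ) (v : Y → ℝ) :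
    ∑ p : X × Y, u p.1 * v p.2 = (∑ x, u x) * (∑ y, v y) := by
  rw [Fintype.sum_mul_sum]
  exact Fintype.sum_prod_type' (fun x y => u x * v y)

lemma one_le_sum_weighted {Z : Type*} [Fintype Z] (P Q : Z → ℝ) (hP0 : ∀ z, 0 ≤ P z)
    (hP1 : ∑ z, P z = 1) (hQpos : ∀ z, 0 < Q z) (hQle : ∀ z, Q z ≤ 1)
    {e : ℝ} (he : e ≤ 0) : 1 ≤ ∑ z, P z * Q z ^ e := by
  calc (1:ℝ) = ∑ z, P z := hP1.symm
    _ ≤ ∑ z, P z * Q z ^ e := by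
        apply Finset.sum_le_sum
        intro z _
        nth_rewrite 1 [← mul_one (P z)]
        exact mul_le_mul_of_nonneg_left
          (Real.one_le_rpow_of_pos_of_le_one_of_nonpos (hQpos z) (hQle z) he) (hP0 z)

lemma one_le_sum_rpow {Z : Type*} [Fintype Z] (Q : Z → ℝ) (hQpos : ∀ z, 0 < Q z)
    (hQle : ∀ z, Q z ≤ 1) (hQ1 : ∑ z, Q z = 1) {a : ℝ} (ha : a ≤ 1) :
    1 ≤ ∑ z, Q z ^ a := by
  calc (1:ℝ) = ∑ z, Q z := hQ1.symm
    _ ≤ ∑ z, Q z ^ a := by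
        apply Finset.sum_le_sum
        intro z _
        nth_rewrite 1 [← Real.rpow_one (Q z)]
        exact Real.rpow_le_rpow_of_exponent_ge (hQpos z) (hQle z) ha

lemma sum_inv_card_fiber_le {X : Type*} [Fintype X] {M : ℕ} (f : X → Fin M) :
    ∑ x, ((Finset.univ.filter fun x' => f x' = f x).card : ℝ)⁻¹ ≤ M := by
  classical
  rw [← Finset.sum_fiberwise_of_maps_to (g := f) (fun x _ => Finset.mem_univ (f x))
    (fun x => ((Finset.univ.filter fun x' => f x' = f x).card : ℝ)⁻¹)]
  have h1 : ∀ b : Fin M,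
      (∑ x ∈ Finset.univ.filter (fun x => f x = b),
        ((Finset.univ.filter fun x' => f x' = f x).card : ℝ)⁻¹) ≤ 1 := by
    intro b
    have hc : ∀ x ∈ Finset.univ.filter (fun x => f x = b),
        ((Finset.univ.filter fun x' => f x' = f x).card : ℝ)⁻¹
          = ((Finset.univ.filter fun x' => f x' = b).card : ℝ)⁻¹ := by
      intro x hx
      rw [(Finset.mem_filter.mp hx).2]
    rw [Finset.sum_congr rfl hc, Finset.sum_const, nsmul_eq_mul]
    rcases Nat.eq_zero_or_pos (Finset.univ.filter (fun x' => f x' = b)).card with h | h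
    · rw [h]; norm_num
    · rw [mul_inv_cancel₀ (by exact_mod_cast h.ne')]
  calc (∑ b : Fin M, ∑ x ∈ Finset.univ.filter (fun x => f x = b),
        ((Finset.univ.filter fun x' => f x' = f x).card : ℝ)⁻¹)
      ≤ ∑ _b : Fin M, (1:ℝ) := Finset.sum_le_sum (fun b _ => h1 b)
    _ = M := by simp

lemma jointListSize_eq_mul {X Y : Type*} [Fintype X] [Fintype Y] {MX MY : ℕ}
    (f : X → Fin MX) (g : Y → Fin MY) (x : X) (y : Y) :
    jointListSize f g x y
      = (Finset.univ.filter fun x' => f x' = f x).card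
        * (Finset.univ.filter fun y' => g y' = g y).card := by
  classical
  unfold jointListSize
  rw [← Finset.univ_product_univ,
    Finset.filter_product (fun x' => f x' = f x) (fun y' => g y' = g y),
    Finset.card_product]

lemma side_exists {X : Type*} [Fintype X] [Nonempty X] {M : ℕ} (f : X → Fin M)
    (ρ : ℝ) (hρ : 0 < ρ) :
    ∃ Q : X → ℝ, (∀ x, 0 ≤ Q x) ∧ (∑ x, Q x = 1) ∧ (∀ x, 0 < Q x) ∧ ∃ Z : ℝ, 0 < Z ∧
      (∀ x, Q x ^ (1/(1+ρ) - 1)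
          = ((Finset.univ.filter fun x' => f x' = f x).card : ℝ) ^ ρ * Z ^ (1 - 1/(1+ρ))) ∧
      ∃ B : ℝ, 0 ≤ B ∧ B ≤ M ∧ (∑ x, Q x ^ (1/(1+ρ))) = Z ^ (-(1/(1+ρ))) * B := by
  classical
  have h1ρ : (0:ℝ) < 1 + ρ := by linarith
  set n : X → ℕ := fun x => (Finset.univ.filter fun x' => f x' = f x).card with hn
  have hn1 : ∀ x, 0 < n x := fun x => Finset.card_pos.mpr ⟨x, by simp⟩
  have hnpos : ∀ x, (0:ℝ) < (n x : ℝ) := fun x => by exact_mod_cast hn1 x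
  set Z : ℝ := ∑ x, (n x : ℝ) ^ (-(1+ρ)) with hZdef
  have hZ : 0 < Z := Finset.sum_pos (fun x _ => Real.rpow_pos_of_pos (hnpos x) _)
    Finset.univ_nonempty
  refine ⟨fun x => (n x : ℝ) ^ (-(1+ρ)) / Z, ?_, ?_, ?_, Z, hZ, ?_, ?_⟩
  · intro x
    exact div_nonneg (Real.rpow_nonneg (Nat.cast_nonneg _) _) hZ.le
  · rw [← Finset.sum_div, div_self hZ.ne']
  · intro x
    exact div_pos (Real.rpow_pos_of_pos (hnpos x) _) hZ
  · intro x
    rw [Real.div_rpow (Real.rpow_nonneg (Nat.cast_nonneg _) _) hZ.le,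
      ← Real.rpow_mul (Nat.cast_nonneg _)]
    rw [show (-(1+ρ)) * (1/(1+ρ) - 1) = ρ by field_simp; ring]
    rw [show (1/(1+ρ) - 1 : ℝ) = -(1 - 1/(1+ρ)) by ring, Real.rpow_neg hZ.le,
      div_inv_eq_mul]
  · refine ⟨∑ x, ((n x : ℝ))⁻¹, ?_, sum_inv_card_fiber_le f, ?_⟩
    · exact Finset.sum_nonneg fun x _ => inv_nonneg.mpr (Nat.cast_nonneg _)
    · have hterm : ∀ x : X, ((n x : ℝ) ^ (-(1+ρ)) / Z) ^ (1/(1+ρ))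
          = Z ^ (-(1/(1+ρ))) * ((n x : ℝ))⁻¹ := by
        intro x
        rw [Real.div_rpow (Real.rpow_nonneg (Nat.cast_nonneg _) _) hZ.le,
          ← Real.rpow_mul (Nat.cast_nonneg _)]
        rw [show (-(1+ρ)) * (1/(1+ρ)) = -1 by field_simp]
        rw [Real.rpow_neg_one, Real.rpow_neg hZ.le, div_eq_mul_inv, mul_comm]
      rw [Finset.sum_congr rfl (fun x _ => hterm x), ← Finset.mul_sum]

/-- `E[L(X,Y)^ρ] ≥ 2^{ρ·[H_{ρ̃}(P_{XY}) + K_{ρ̃}(X;Y) − log₂(M_X·M_Y)]}` with `ρ̃ = 1/(1+ρ)`. -/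
theorem joint_rho_moment_ge
    {X Y : Type*} [Fintype X] [Fintype Y] {MX MY : ℕ} (hMX : 0 < MX) (hMY : 0 < MY)
    (f : X → Fin MX) (g : Y → Fin MY)
    (P : X × Y → ℝ) (hP : IsPMF P) (ρ : ℝ) (hρ : 0 < ρ) :
    ∑ p : X × Y, P p * (jointListSize f g p.1 p.2 : ℝ) ^ ρ ≥
      (2 : ℝ) ^ (ρ * (renyiEntropy (1 / (1 + ρ)) P + Kdep (1 / (1 + ρ)) P
        - Real.logb 2 ((MX : ℝ) * (MY : ℝ)))) := by
  classical
  obtain ⟨hP0, hP1⟩ := hP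
  have h1ρ : (0:ℝ) < 1 + ρ := by linarith
  have hne : Nonempty (X × Y) := by
    by_contra h
    rw [not_nonempty_iff] at h
    rw [Finset.univ_eq_empty, Finset.sum_empty] at hP1
    exact one_ne_zero hP1.symm
  haveI hneX : Nonempty X := ⟨hne.some.1⟩
  haveI hneY : Nonempty Y := ⟨hne.some.2⟩
  obtain ⟨QX, hQX0, hQX1, hQXpos, ZX, hZX, hQXpow, BX, hBX0, hBXle, hQXsum⟩ :=
    side_exists f ρ hρ
  obtain ⟨QY, hQY0, hQY1, hQYpos, ZY, hZY, hQYpow, BY, hBY0, hBYle, hQYsum⟩ :=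
    side_exists g ρ hρ
  set α : ℝ := 1 / (1 + ρ) with hαdef
  have hαpos : 0 < α := by rw [hαdef]; positivity
  have hα1 : α < 1 := by rw [hαdef, div_lt_one h1ρ]; linarith
  have h1α : (0:ℝ) < 1 - α := by linarith
  have hρα : ρ * (α / (1 - α)) = 1 := by
    rw [hαdef]
    field_simp
    rw [show (1 + ρ - 1 : ℝ) = ρ by ring, div_self hρ.ne']
  set Qp : X × Y → ℝ := fun p => QX p.1 * QY p.2 with hQp
  have hQppos : ∀ p, 0 < Qp p := fun p => mul_pos (hQXpos p.1) (hQYpos p.2)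
  have hQple : ∀ p, Qp p ≤ 1 := fun p =>
    mul_le_one₀ (pmf_le_one' hQX0 hQX1 p.1) (hQY0 p.2) (pmf_le_one' hQY0 hQY1 p.2)
  have hQpsum : ∑ p, Qp p = 1 := by
    rw [hQp]
    rw [sum_prod_fun QX QY, hQX1, hQY1, mul_one]
  set S1 := ∑ p : X × Y, P p * Qp p ^ (α - 1) with hS1
  set S2 := ∑ p : X × Y, Qp p ^ α with hS2
  have hS1ge : 1 ≤ S1 := one_le_sum_weighted P Qp hP0 hP1 hQppos hQple (by linarith)
  have hS2ge : 1 ≤ S2 := one_le_sum_rpow Qp hQppos hQple hQpsum hα1.le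
  have hS1pos : 0 < S1 := lt_of_lt_of_le one_pos hS1ge
  have hS2pos : 0 < S2 := lt_of_lt_of_le one_pos hS2ge
  -- bound Kdep by the relative entropy at our particular Q
  have hbdd : BddBelow {r : ℝ | ∃ QX' : X → ℝ, ∃ QY' : Y → ℝ, IsPMF QX' ∧ IsPMF QY' ∧
      (∀ x, 0 < QX' x) ∧ (∀ y, 0 < QY' y) ∧
      r = relAlphaEntropy α P (fun p => QX' p.1 * QY' p.2)} := by
    refine ⟨-((1 - α)⁻¹ * Real.logb 2 (∑ p : X × Y, P p ^ α)), ?_⟩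
    rintro r ⟨QX', QY', ⟨h0X, h1X⟩, ⟨h0Y, h1Y⟩, hpX, hpY, rfl⟩
    simp only [relAlphaEntropy]
    have hppos : ∀ p : X × Y, 0 < QX' p.1 * QY' p.2 := fun p => mul_pos (hpX p.1) (hpY p.2)
    have hple : ∀ p : X × Y, QX' p.1 * QY' p.2 ≤ 1 := fun p =>
      mul_le_one₀ (pmf_le_one' h0X h1X p.1) (h0Y p.2) (pmf_le_one' h0Y h1Y p.2)
    have hpsum : ∑ p : X × Y, QX' p.1 * QY' p.2 = 1 := by
      rw [sum_prod_fun QX' QY', h1X, h1Y, mul_one]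
    have t1 : 0 ≤ (α / (1 - α)) *
        Real.logb 2 (∑ p : X × Y, P p * (QX' p.1 * QY' p.2) ^ (α - 1)) :=
      mul_nonneg (div_nonneg hαpos.le h1α.le)
        (Real.logb_nonneg one_lt_two
          (one_le_sum_weighted P _ hP0 hP1 hppos hple (by linarith)))
    have t2 : 0 ≤ Real.logb 2 (∑ p : X × Y, (QX' p.1 * QY' p.2) ^ α) :=
      Real.logb_nonneg one_lt_two (one_le_sum_rpow _ hppos hple hpsum hα1.le)
    linarith
  have hmem : relAlphaEntropy α P Qp ∈ {r : ℝ | ∃ QX' : X → ℝ, ∃ QY' : Y → ℝ,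
      IsPMF QX' ∧ IsPMF QY' ∧ (∀ x, 0 < QX' x) ∧ (∀ y, 0 < QY' y) ∧
      r = relAlphaEntropy α P (fun p => QX' p.1 * QY' p.2)} :=
    ⟨QX, QY, ⟨hQX0, hQX1⟩, ⟨hQY0, hQY1⟩, hQXpos, hQYpos, rfl⟩
  have hK : Kdep α P ≤ relAlphaEntropy α P Qp := by
    unfold Kdep
    exact csInf_le hbdd hmem
  -- the goal's expectation
  set E := ∑ p : X × Y, P p * (jointListSize f g p.1 p.2 : ℝ) ^ ρ with hE
  have hEnn : 0 ≤ E :=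
    Finset.sum_nonneg fun p _ =>
      mul_nonneg (hP0 p) (Real.rpow_nonneg (Nat.cast_nonneg _) _)
  -- cast of jointListSize
  have hjls : ∀ p : X × Y, (jointListSize f g p.1 p.2 : ℝ) ^ ρ
      = ((Finset.univ.filter fun x' => f x' = f p.1).card : ℝ) ^ ρ
        * ((Finset.univ.filter fun y' => g y' = g p.2).card : ℝ) ^ ρ := by
    intro p
    rw [jointListSize_eq_mul f g p.1 p.2, Nat.cast_mul,
      Real.mul_rpow (Nat.cast_nonneg _) (Nat.cast_nonneg _)]
  -- computation of S1
  have hS1eq : S1 = ZX ^ (1 - α) * ZY ^ (1 - α) * E := by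
    calc S1 = ∑ p : X × Y,
          (ZX ^ (1 - α) * ZY ^ (1 - α)) * (P p * (jointListSize f g p.1 p.2 : ℝ) ^ ρ) := by
          rw [hS1]
          refine Finset.sum_congr rfl fun p _ => ?_
          simp only [hQp]
          rw [Real.mul_rpow (hQX0 p.1) (hQY0 p.2), hQXpow p.1, hQYpow p.2, hjls p]
          ring
      _ = ZX ^ (1 - α) * ZY ^ (1 - α) * E := by rw [← Finset.mul_sum, hE]
  -- computation of S2
  have hS2eq : S2 = (ZX ^ (-α) * BX) * (ZY ^ (-α) * BY) := by
    calc S2 = ∑ p : X × Y, (QX p.1 ^ α) * (QY p.2 ^ α) := by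
          rw [hS2]
          refine Finset.sum_congr rfl fun p _ => ?_
          simp only [hQp]
          exact Real.mul_rpow (hQX0 p.1) (hQY0 p.2)
      _ = (∑ x, QX x ^ α) * (∑ y, QY y ^ α) :=
        sum_prod_fun (fun x => QX x ^ α) (fun y => QY y ^ α)
      _ = (ZX ^ (-α) * BX) * (ZY ^ (-α) * BY) := by rw [hQXsum, hQYsum]
  -- collapsing the normalizations
  have hZXcol : ZX ^ (1 - α) * (ZX ^ (-α)) ^ ρ = 1 := by
    rw [← Real.rpow_mul hZX.le, ← Real.rpow_add hZX,
      show (1 - α) + (-α) * ρ = 0 by rw [hαdef]; field_simp; ring, Real.rpow_zero]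
  have hZYcol : ZY ^ (1 - α) * (ZY ^ (-α)) ^ ρ = 1 := by
    rw [← Real.rpow_mul hZY.le, ← Real.rpow_add hZY,
      show (1 - α) + (-α) * ρ = 0 by rw [hαdef]; field_simp; ring, Real.rpow_zero]
  have hcomb : S1 * S2 ^ ρ = E * (BX ^ ρ * BY ^ ρ) := by
    have e1 : (0:ℝ) ≤ ZX ^ (-α) * BX := mul_nonneg (Real.rpow_nonneg hZX.le _) hBX0
    have e2 : (0:ℝ) ≤ ZY ^ (-α) * BY := mul_nonneg (Real.rpow_nonneg hZY.le _) hBY0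
    rw [hS1eq, hS2eq, Real.mul_rpow e1 e2,
      Real.mul_rpow (Real.rpow_nonneg hZX.le _) hBX0,
      Real.mul_rpow (Real.rpow_nonneg hZY.le _) hBY0]
    calc ZX ^ (1 - α) * ZY ^ (1 - α) * E * ((ZX ^ (-α)) ^ ρ * BX ^ ρ * ((ZY ^ (-α)) ^ ρ * BY ^ ρ))
        = (ZX ^ (1 - α) * (ZX ^ (-α)) ^ ρ) * (ZY ^ (1 - α) * (ZY ^ (-α)) ^ ρ)
            * (E * (BX ^ ρ * BY ^ ρ)) := by ring
      _ = E * (BX ^ ρ * BY ^ ρ) := by rw [hZXcol, hZYcol]; ring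
  -- the M factor
  set Mr : ℝ := (MX : ℝ) * (MY : ℝ) with hMr
  have hMrpos : 0 < Mr := mul_pos (by exact_mod_cast hMX) (by exact_mod_cast hMY)
  have hMrrpow : Mr ^ ρ = (MX : ℝ) ^ ρ * (MY : ℝ) ^ ρ := by
    rw [hMr, Real.mul_rpow (Nat.cast_nonneg _) (Nat.cast_nonneg _)]
  have hfinal : S1 * S2 ^ ρ / Mr ^ ρ ≤ E := by
    rw [div_le_iff₀ (Real.rpow_pos_of_pos hMrpos ρ)]
    rw [hcomb, hMrrpow]
    have h1 : BX ^ ρ ≤ (MX : ℝ) ^ ρ := Real.rpow_le_rpow hBX0 hBXle hρ.le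
    have h2 : BY ^ ρ ≤ (MY : ℝ) ^ ρ := Real.rpow_le_rpow hBY0 hBYle hρ.le
    have h3 : BX ^ ρ * BY ^ ρ ≤ (MX : ℝ) ^ ρ * (MY : ℝ) ^ ρ :=
      mul_le_mul h1 h2 (Real.rpow_nonneg hBY0 _) (Real.rpow_nonneg (Nat.cast_nonneg _) _)
    exact mul_le_mul_of_nonneg_left h3 hEnn
  -- the exponent identity
  have hexp : ρ * (renyiEntropy α P + relAlphaEntropy α P Qp - Real.logb 2 Mr)
      = Real.logb 2 S1 + ρ * Real.logb 2 S2 - ρ * Real.logb 2 Mr := by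
    simp only [renyiEntropy, relAlphaEntropy, hS1, hS2]
    linear_combination Real.logb 2 S1 * hρα
  have h2eq : (2:ℝ) ^ (Real.logb 2 S1 + ρ * Real.logb 2 S2 - ρ * Real.logb 2 Mr)
      = S1 * S2 ^ ρ / Mr ^ ρ := by
    rw [Real.rpow_sub two_pos, Real.rpow_add two_pos,
      Real.rpow_logb two_pos (by norm_num) hS1pos,
      mul_comm ρ (Real.logb 2 S2), Real.rpow_mul (by norm_num : (0:ℝ) ≤ 2),
      Real.rpow_logb two_pos (by norm_num) hS2pos,
      mul_comm ρ (Real.logb 2 Mr), Real.rpow_mul (by norm_num : (0:ℝ) ≤ 2),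
      Real.rpow_logb two_pos (by norm_num) hMrpos]
  rw [ge_iff_le]
  calc (2:ℝ) ^ (ρ * (renyiEntropy α P + Kdep α P - Real.logb 2 Mr))
      ≤ (2:ℝ) ^ (ρ * (renyiEntropy α P + relAlphaEntropy α P Qp - Real.logb 2 Mr)) := by
        apply Real.rpow_le_rpow_of_exponent_le one_le_two
        apply mul_le_mul_of_nonneg_left _ hρ.le
        linarith
    _ = S1 * S2 ^ ρ / Mr ^ ρ := by rw [hexp, h2eq]
    _ ≤ E := hfinal
end

section
/- Let P_{XY} be a joint PMF on the finite set X × Y with marginal P_X on X, let f : X → {1,…,M_X} and g : Y → {1,…,M_Y}, let L(x,y) = |{(x',y') ∈ X × Y : f(x') = f(x) ∧ g(y') = g(y)}|, and let ρ > 0 with ρ̃ = 1/(1+ρ). Then E[L(X,Y)^ρ] ≥ 2^{ρ·[H_{ρ̃}(P_X) − log₂ M_X]}. -/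
/-- Sum of reciprocals of fiber sizes is at most the number of possible values. -/
lemma sum_inv_fiber_card_le {X : Type*} [Fintype X] {M : ℕ} (f : X → Fin M) :
    ∑ x : X, ((Finset.univ.filter (fun x' => f x' = f x)).card : ℝ)⁻¹ ≤ (M : ℝ) := by
  classical
  have h := Finset.sum_fiberwise Finset.univ f
    (fun x => ((Finset.univ.filter (fun x' => f x' = f x)).card : ℝ)⁻¹)
  rw [← h]
  calc ∑ i : Fin M, ∑ x ∈ Finset.univ.filter (fun x => f x = i),
        ((Finset.univ.filter (fun x' => f x' = f x)).card : ℝ)⁻¹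
      ≤ ∑ _i : Fin M, (1 : ℝ) := by
        refine Finset.sum_le_sum fun i _ => ?_
        have hcongr : ∀ x ∈ Finset.univ.filter (fun x => f x = i),
            ((Finset.univ.filter (fun x' => f x' = f x)).card : ℝ)⁻¹ =
            ((Finset.univ.filter (fun x' => f x' = i)).card : ℝ)⁻¹ := by
          intro x hx
          simp only [Finset.mem_filter] at hx
          rw [hx.2]
        rw [Finset.sum_congr rfl hcongr, Finset.sum_const, nsmul_eq_mul]
        rcases Nat.eq_zero_or_pos (Finset.univ.filter (fun x' => f x' = i)).card with h0 | hpos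
        · rw [h0]; norm_num
        · rw [mul_inv_cancel₀ (by positivity)]
    _ = (M : ℝ) := by simp

/-- `E[L(X,Y)^ρ] ≥ 2^{ρ·[H_{1/(1+ρ)}(P_X) − log₂ M_X]}`, where `P_X` is the
marginal of `P_{XY}` on the first coordinate. -/
theorem joint_rho_moment_ge_marginal
    {X Y : Type*} [Fintype X] [Fintype Y] {MX MY : ℕ} (hMX : 0 < MX) (hMY : 0 < MY)
    (f : X → Fin MX) (g : Y → Fin MY)
    (P : X × Y → ℝ) (hP : IsPMF P) (ρ : ℝ) (hρ : 0 < ρ) :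
    ∑ p : X × Y, P p * (jointListSize f g p.1 p.2 : ℝ) ^ ρ ≥
      (2 : ℝ) ^ (ρ * (renyiEntropy (1 / (1 + ρ)) (fun x => ∑ y, P (x, y))
        - Real.logb 2 (MX : ℝ))) := by
  classical
  obtain ⟨hP0, hP1⟩ := hP
  have hρ1 : (0:ℝ) < 1 + ρ := by linarith
  set rt : ℝ := 1 / (1 + ρ) with hrt
  have hrt_pos : 0 < rt := by positivity
  have hrt_mul : rt * (1 + ρ) = 1 := by rw [hrt]; field_simp
  set Q : X → ℝ := fun x => ∑ y, P (x, y) with hQdef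
  have hQ0 : ∀ x, 0 ≤ Q x := fun x => Finset.sum_nonneg fun y _ => hP0 _
  have hQ1 : ∑ x, Q x = 1 := by
    rw [← hP1, Fintype.sum_prod_type]
  set N : X → ℕ := fun x => (Finset.univ.filter (fun x' => f x' = f x)).card with hNdef
  have hN1 : ∀ x, 1 ≤ N x := by
    intro x
    exact Finset.card_pos.mpr ⟨x, Finset.mem_filter.mpr ⟨Finset.mem_univ x, rfl⟩⟩
  set Mm : Y → ℕ := fun y => (Finset.univ.filter (fun y' => g y' = g y)).card with hMdef
  have hM1 : ∀ y, 1 ≤ Mm y := by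
    intro y
    exact Finset.card_pos.mpr ⟨y, Finset.mem_filter.mpr ⟨Finset.mem_univ y, rfl⟩⟩
  have hL : ∀ x y, jointListSize f g x y = N x * Mm y := by
    intro x y
    rw [jointListSize, hNdef, hMdef]
    have : Finset.univ.filter (fun p : X × Y => f p.1 = f x ∧ g p.2 = g y) =
        (Finset.univ.filter (fun x' => f x' = f x)) ×ˢ
          (Finset.univ.filter (fun y' => g y' = g y)) := by
      ext ⟨a, b⟩
      simp [Finset.mem_filter, Finset.mem_product]
    rw [this, Finset.card_product]
  set S : ℝ := ∑ x, Q x ^ rt with hSdef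
  set T : ℝ := ∑ x, Q x * (N x : ℝ) ^ ρ with hTdef
  set U : ℝ := ∑ x, ((N x : ℝ))⁻¹ with hUdef
  have hT0 : 0 ≤ T :=
    Finset.sum_nonneg fun x _ => mul_nonneg (hQ0 x) (Real.rpow_nonneg (by positivity) _)
  have hU0 : 0 ≤ U := Finset.sum_nonneg fun x _ => by positivity
  have hUle : U ≤ (MX : ℝ) := sum_inv_fiber_card_le f
  -- S is positive
  have hSpos : 0 < S := by
    have hx : ∃ x, 0 < Q x := by
      by_contra h
      push_neg at h
      have : ∑ x, Q x = 0 := Finset.sum_eq_zero fun x _ => le_antisymm (h x) (hQ0 x)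
      rw [hQ1] at this; norm_num at this
    obtain ⟨x₀, hx₀⟩ := hx
    refine Finset.sum_pos' (fun x _ => Real.rpow_nonneg (hQ0 x) _) ⟨x₀, Finset.mem_univ _, ?_⟩
    exact Real.rpow_pos_of_pos hx₀ _
  -- Hölder step
  have hHolder : S ≤ T ^ rt * U ^ (ρ * rt) := by
    have hpq : Real.HolderConjugate (1 + ρ) ((1 + ρ) / ρ) := by
      rw [Real.holderConjugate_iff_eq_conjExponent (by linarith), add_sub_cancel_left]
    have h := Real.inner_le_Lp_mul_Lq_of_nonneg Finset.univ hpq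
      (f := fun x => (Q x * (N x : ℝ) ^ ρ) ^ rt)
      (g := fun x => ((N x : ℝ))⁻¹ ^ (ρ * rt))
      (fun x _ => Real.rpow_nonneg (mul_nonneg (hQ0 x) (Real.rpow_nonneg (by positivity) _)) _)
      (fun x _ => Real.rpow_nonneg (by positivity) _)
    have hNpos : ∀ x, (0:ℝ) < (N x : ℝ) := fun x => by
      exact_mod_cast Nat.lt_of_lt_of_le Nat.zero_lt_one (hN1 x)
    have e1 : ∀ x, (Q x * (N x : ℝ) ^ ρ) ^ rt * ((N x : ℝ))⁻¹ ^ (ρ * rt) = Q x ^ rt := by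
      intro x
      have nn : (0:ℝ) ≤ (N x : ℝ) := le_of_lt (hNpos x)
      rw [Real.mul_rpow (hQ0 x) (Real.rpow_nonneg nn _), ← Real.rpow_mul nn,
        Real.inv_rpow nn, ← Real.rpow_neg nn, mul_assoc, ← Real.rpow_add (hNpos x),
        add_neg_cancel, Real.rpow_zero, mul_one]
    have e2 : ∀ x, ((Q x * (N x : ℝ) ^ ρ) ^ rt) ^ (1 + ρ) = Q x * (N x : ℝ) ^ ρ := by
      intro x
      rw [← Real.rpow_mul (mul_nonneg (hQ0 x) (Real.rpow_nonneg (by positivity) _)),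
        hrt_mul, Real.rpow_one]
    have e3 : ∀ x, (((N x : ℝ))⁻¹ ^ (ρ * rt)) ^ ((1 + ρ) / ρ) = ((N x : ℝ))⁻¹ := by
      intro x
      rw [← Real.rpow_mul (by positivity),
        show ρ * rt * ((1 + ρ) / ρ) = 1 by rw [hrt]; field_simp,
        Real.rpow_one]
    calc S = ∑ x, (Q x * (N x : ℝ) ^ ρ) ^ rt * ((N x : ℝ))⁻¹ ^ (ρ * rt) := by
          rw [hSdef]; exact Finset.sum_congr rfl fun x _ => (e1 x).symm
      _ ≤ (∑ x, ((Q x * (N x : ℝ) ^ ρ) ^ rt) ^ (1 + ρ)) ^ (1 / (1 + ρ)) *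
          (∑ x, (((N x : ℝ))⁻¹ ^ (ρ * rt)) ^ ((1 + ρ) / ρ)) ^ (1 / ((1 + ρ) / ρ)) := h
      _ = T ^ rt * U ^ (ρ * rt) := by
          congr 1
          · congr 1
            exact Finset.sum_congr rfl fun x _ => e2 x
          · rw [show (1 / ((1 + ρ) / ρ)) = ρ * rt by rw [hrt, one_div_div]; ring]
            congr 1
            exact Finset.sum_congr rfl fun x _ => e3 x
  have hMXpos : (0:ℝ) < (MX : ℝ) := by exact_mod_cast hMX
  have hS2 : S ≤ T ^ rt * (MX : ℝ) ^ (ρ * rt) :=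
    hHolder.trans (mul_le_mul_of_nonneg_left
      (Real.rpow_le_rpow hU0 hUle (by positivity)) (Real.rpow_nonneg hT0 _))
  -- raise to power (1 + ρ)
  have hS3 : S ^ (1 + ρ) ≤ T * (MX : ℝ) ^ ρ := by
    have := Real.rpow_le_rpow (le_of_lt hSpos) hS2 (le_of_lt hρ1)
    refine this.trans_eq ?_
    rw [Real.mul_rpow (Real.rpow_nonneg hT0 _) (Real.rpow_nonneg (le_of_lt hMXpos) _),
      ← Real.rpow_mul hT0, ← Real.rpow_mul (le_of_lt hMXpos), hrt_mul, Real.rpow_one,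
      show ρ * rt * (1 + ρ) = ρ by rw [mul_assoc, hrt_mul, mul_one]]
  -- T ≤ LHS
  have hTle : T ≤ ∑ p : X × Y, P p * (jointListSize f g p.1 p.2 : ℝ) ^ ρ := by
    rw [hTdef, Fintype.sum_prod_type]
    refine Finset.sum_le_sum fun x _ => ?_
    rw [show Q x * (N x : ℝ) ^ ρ = ∑ y, P (x, y) * (N x : ℝ) ^ ρ from
      Finset.sum_mul ..]
    refine Finset.sum_le_sum fun y _ => ?_
    refine mul_le_mul_of_nonneg_left ?_ (hP0 _)
    apply Real.rpow_le_rpow (by positivity) _ (le_of_lt hρ)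
    rw [hL x y]
    push_cast
    have h1 : (1:ℝ) ≤ (N x : ℝ) := by exact_mod_cast hN1 x
    have h2 : (1:ℝ) ≤ (Mm y : ℝ) := by exact_mod_cast hM1 y
    nlinarith
  -- compute the RHS
  have hRHS : (2 : ℝ) ^ (ρ * (renyiEntropy (1 / (1 + ρ)) (fun x => ∑ y, P (x, y))
      - Real.logb 2 (MX : ℝ))) = S ^ (1 + ρ) * (MX : ℝ) ^ (-ρ) := by
    have hcoef : ((1:ℝ) - 1 / (1 + ρ))⁻¹ = (1 + ρ) / ρ := by
      rw [show (1 : ℝ) - 1 / (1 + ρ) = ρ / (1 + ρ) by field_simp; ring, inv_div]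
    have hexp : ρ * (renyiEntropy (1 / (1 + ρ)) (fun x => ∑ y, P (x, y))
        - Real.logb 2 (MX : ℝ)) = Real.logb 2 S * (1 + ρ) + Real.logb 2 (MX : ℝ) * (-ρ) := by
      rw [renyiEntropy]
      have h1 : (∑ x, (∑ y, P (x, y)) ^ (1 / (1 + ρ))) = S := rfl
      rw [h1, hcoef, mul_sub]
      field_simp
      ring
    rw [hexp, Real.rpow_add (by norm_num : (0:ℝ) < 2),
      Real.rpow_mul (by norm_num : (0:ℝ) ≤ 2), Real.rpow_mul (by norm_num : (0:ℝ) ≤ 2),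
      Real.rpow_logb (by norm_num) (by norm_num) hSpos,
      Real.rpow_logb (by norm_num) (by norm_num) hMXpos]
  rw [ge_iff_le, hRHS]
  calc S ^ (1 + ρ) * (MX : ℝ) ^ (-ρ) ≤ (T * (MX : ℝ) ^ ρ) * (MX : ℝ) ^ (-ρ) :=
        mul_le_mul_of_nonneg_right hS3 (Real.rpow_nonneg (le_of_lt hMXpos) _)
    _ = T := by
        rw [mul_assoc, ← Real.rpow_add hMXpos]
        simp
    _ ≤ _ := hTle
end

section
/- (Converse of the distributed task-encoding theorem, IID case.) Fix ρ > 0 and set ρ̃ = 1/(1+ρ). Let P_{XY} be a joint PMF on the finite set X × Y, and let {(X_i,Y_i)}_{i=1}^∞ be IID with distribution P_{XY}. Let R_X, R_Y ≥ 0, and suppose there exists a sequence of pairs of functions f_n : X^n → {1,…,⌊2^{n·R_X}⌋}, g_n : Y^n → {1,…,⌊2^{n·R_Y}⌋} such that E[L(X^n,Y^n)^ρ] → 1 as n → ∞, where L(x^n,y^n) = |{(x',y') ∈ X^n × Y^n : f_n(x') = f_n(x^n) ∧ g_n(y') = g_n(y^n)}|. Then R_X ≥ H_{ρ̃}(P_X),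 R_Y ≥ H_{ρ̃}(P_Y), and R_X + R_Y ≥ H_{ρ̃}(P_{XY}) + K_{ρ̃}(X;Y). -/
open Filter

lemma IsPMF.exists_pos {W : Type*} [Fintype W] {P : W → ℝ} (hP : IsPMF P) :
    ∃ w, 0 < P w := by
  by_contra h
  push_neg at h
  have : ∑ w, P w = 0 := le_antisymm (Finset.sum_nonpos fun w _ => h w)
    (Finset.sum_nonneg fun w _ => hP.1 w)
  rw [hP.2] at this; norm_num at this

lemma sum_rpow_pos {W : Type*} [Fintype W] {P : W → ℝ} (hP : IsPMF P) (t : ℝ) (ht : 0 < t) :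
    0 < ∑ w, P w ^ t := by
  obtain ⟨w₀, hw₀⟩ := hP.exists_pos
  exact Finset.sum_pos' (fun w _ => Real.rpow_nonneg (hP.1 w) t)
    ⟨w₀, Finset.mem_univ _, Real.rpow_pos_of_pos hw₀ t⟩

/-- Reverse Hölder: for nonnegative `μ` and a positive PMF `q`,
`(∑ μ^{1/(1+ρ)})^{1+ρ} ≤ ∑ μ q^{-ρ}`. -/
lemma holder_pmf {W : Type*} [Fintype W] {ρ : ℝ} (hρ : 0 < ρ) (μ q : W → ℝ)
    (hμ : ∀ w, 0 ≤ μ w) (hq : ∀ w, 0 < q w) (hq1 : ∑ w, q w = 1) :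
    (∑ w, μ w ^ (1/(1+ρ))) ^ (1+ρ) ≤ ∑ w, μ w * q w ^ (-ρ) := by
  have h1ρ : (0:ℝ) < 1 + ρ := by linarith
  have hpq : Real.HolderConjugate (1+ρ) ((1+ρ)/ρ) := by
    rw [Real.holderConjugate_iff]; constructor
    · linarith
    · rw [inv_div]; field_simp
  have key := Real.inner_le_Lp_mul_Lq Finset.univ
    (fun w => (μ w * q w ^ (-ρ)) ^ (1/(1+ρ))) (fun w => q w ^ (ρ/(1+ρ))) hpq
  have hT : (0:ℝ) ≤ ∑ w, μ w * q w ^ (-ρ) :=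
    Finset.sum_nonneg fun w _ => mul_nonneg (hμ w) (Real.rpow_nonneg (hq w).le _)
  have e1 : ∀ w : W, (μ w * q w ^ (-ρ)) ^ (1/(1+ρ)) * q w ^ (ρ/(1+ρ)) = μ w ^ (1/(1+ρ)) := by
    intro w
    rw [Real.mul_rpow (hμ w) (Real.rpow_nonneg (hq w).le _), ← Real.rpow_mul (hq w).le,
      mul_assoc, ← Real.rpow_add (hq w)]
    have : -ρ * (1/(1+ρ)) + ρ/(1+ρ) = 0 := by field_simp; ring
    rw [this, Real.rpow_zero, mul_one]
  have e2 : ∀ w : W, |(μ w * q w ^ (-ρ)) ^ (1/(1+ρ))| ^ (1+ρ) = μ w * q w ^ (-ρ) := by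
    intro w
    have hz : (0:ℝ) ≤ μ w * q w ^ (-ρ) := mul_nonneg (hμ w) (Real.rpow_nonneg (hq w).le _)
    rw [abs_of_nonneg (Real.rpow_nonneg hz _), ← Real.rpow_mul hz]
    rw [one_div, inv_mul_cancel₀ h1ρ.ne', Real.rpow_one]
  have e3 : ∀ w : W, |q w ^ (ρ/(1+ρ))| ^ ((1+ρ)/ρ) = q w := by
    intro w
    rw [abs_of_nonneg (Real.rpow_nonneg (hq w).le _), ← Real.rpow_mul (hq w).le]
    rw [div_mul_div_comm, mul_comm ρ (1+ρ), div_self (by positivity), Real.rpow_one]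
  simp only [e1, e2, e3] at key
  rw [hq1, Real.one_rpow, mul_one] at key
  calc (∑ w, μ w ^ (1/(1+ρ))) ^ (1+ρ)
      ≤ ((∑ w, μ w * q w ^ (-ρ)) ^ (1/(1+ρ))) ^ (1+ρ) :=
        Real.rpow_le_rpow (Finset.sum_nonneg fun w _ => Real.rpow_nonneg (hμ w) _) key h1ρ.le
    _ = ∑ w, μ w * q w ^ (-ρ) := by
        rw [← Real.rpow_mul hT, one_div, inv_mul_cancel₀ h1ρ.ne', Real.rpow_one]

lemma relAlpha_nonneg {W : Type*} [Fintype W] {α : ℝ} (hα0 : 0 < α) (hα1 : α < 1)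
    {P Q : W → ℝ} (hP : IsPMF P) (hQpos : ∀ w, 0 < Q w) :
    0 ≤ relAlphaEntropy α P Q := by
  have h1α : (0:ℝ) < 1 - α := by linarith
  obtain ⟨w₀, hw₀⟩ := hP.exists_pos
  set S1 := ∑ w, P w * Q w ^ (α - 1) with hS1
  set S2 := ∑ w, Q w ^ α with hS2
  set S3 := ∑ w, P w ^ α with hS3
  have hS1pos : 0 < S1 :=
    Finset.sum_pos' (fun w _ => mul_nonneg (hP.1 w) (Real.rpow_nonneg (hQpos w).le _))
      ⟨w₀, Finset.mem_univ _, mul_pos hw₀ (Real.rpow_pos_of_pos (hQpos w₀) _)⟩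
  have hS2pos : 0 < S2 :=
    Finset.sum_pos (fun w _ => Real.rpow_pos_of_pos (hQpos w) _) ⟨w₀, Finset.mem_univ _⟩
  have hS3pos : 0 < S3 :=
    Finset.sum_pos' (fun w _ => Real.rpow_nonneg (hP.1 w) _)
      ⟨w₀, Finset.mem_univ _, Real.rpow_pos_of_pos hw₀ _⟩
  -- Hölder : S3 ≤ S1^α * S2^(1-α)
  have hpq : Real.HolderConjugate (1/α) (1/(1-α)) := by
    rw [Real.holderConjugate_iff]; constructor
    · rw [one_div]; exact (one_lt_inv₀ hα0).mpr hα1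
    · simp
  have key := Real.inner_le_Lp_mul_Lq Finset.univ
    (fun w => (P w * Q w ^ (α - 1)) ^ α) (fun w => Q w ^ (α * (1-α))) hpq
  have e1 : ∀ w : W, (P w * Q w ^ (α - 1)) ^ α * Q w ^ (α * (1-α)) = P w ^ α := by
    intro w
    rw [Real.mul_rpow (hP.1 w) (Real.rpow_nonneg (hQpos w).le _), ← Real.rpow_mul (hQpos w).le,
      mul_assoc, ← Real.rpow_add (hQpos w)]
    have : (α - 1) * α + α * (1-α) = 0 := by ring
    rw [this, Real.rpow_zero, mul_one]
  have e2 : ∀ w : W, |(P w * Q w ^ (α - 1)) ^ α| ^ (1/α) = P w * Q w ^ (α - 1) := by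
    intro w
    have hz : (0:ℝ) ≤ P w * Q w ^ (α - 1) :=
      mul_nonneg (hP.1 w) (Real.rpow_nonneg (hQpos w).le _)
    rw [abs_of_nonneg (Real.rpow_nonneg hz _), ← Real.rpow_mul hz, mul_one_div,
      div_self hα0.ne', Real.rpow_one]
  have e3 : ∀ w : W, |Q w ^ (α * (1-α))| ^ (1/(1-α)) = Q w ^ α := by
    intro w
    rw [abs_of_nonneg (Real.rpow_nonneg (hQpos w).le _), ← Real.rpow_mul (hQpos w).le,
      mul_one_div, mul_div_assoc, div_self h1α.ne', mul_one]
  simp only [e1, e2, e3] at key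
  rw [← hS1, ← hS2, ← hS3, one_div_one_div, one_div_one_div] at key
  -- key : S3 ≤ S1 ^ α * S2 ^ (1-α)
  have hRpos : 0 < S1 ^ α * S2 ^ (1-α) :=
    mul_pos (Real.rpow_pos_of_pos hS1pos _) (Real.rpow_pos_of_pos hS2pos _)
  have hlog : Real.logb 2 S3 ≤ α * Real.logb 2 S1 + (1-α) * Real.logb 2 S2 := by
    have h := (Real.logb_le_logb (b := 2) one_lt_two hS3pos hRpos).mpr key
    rwa [Real.logb_mul (Real.rpow_pos_of_pos hS1pos _).ne' (Real.rpow_pos_of_pos hS2pos _).ne',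
      Real.logb_rpow_eq_mul_logb_of_pos hS1pos, Real.logb_rpow_eq_mul_logb_of_pos hS2pos] at h
  have hid : (1-α)⁻¹ * (α * Real.logb 2 S1 + (1-α) * Real.logb 2 S2)
      = α / (1-α) * Real.logb 2 S1 + Real.logb 2 S2 := by
    field_simp
  have hmul := mul_le_mul_of_nonneg_left hlog (inv_nonneg.mpr h1α.le)
  rw [hid] at hmul
  unfold relAlphaEntropy
  rw [← hS1, ← hS2, ← hS3]
  linarith

lemma Kdep_le_aux {X Y : Type*} [Fintype X] [Fintype Y] {ρ : ℝ} (hρ : 0 < ρ)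
    {P : X × Y → ℝ} (hP : IsPMF P) (a : X → ℝ) (b : Y → ℝ)
    (ha : IsPMF a) (hb : IsPMF b) (hapos : ∀ x, 0 < a x) (hbpos : ∀ y, 0 < b y) :
    (2:ℝ) ^ (ρ * (renyiEntropy (1/(1+ρ)) P + Kdep (1/(1+ρ)) P))
      ≤ ∑ p : X × Y, P p * (a p.1 * b p.2) ^ (-ρ) := by
  have h1ρ : (0:ℝ) < 1 + ρ := by linarith
  set α : ℝ := 1/(1+ρ) with hα
  have hα0 : 0 < α := by positivity
  have hα1 : α < 1 := by rw [hα, div_lt_one h1ρ]; linarith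
  obtain ⟨p₀, hp₀⟩ := hP.exists_pos
  haveI : Nonempty X := ⟨p₀.1⟩
  haveI : Nonempty Y := ⟨p₀.2⟩
  have hα' : (1+ρ) * α = 1 := by rw [hα]; field_simp
  set S := ∑ p : X × Y, P p * (a p.1 * b p.2) ^ (-ρ) with hS
  have hSpos : 0 < S := by
    refine Finset.sum_pos' (fun p _ => mul_nonneg (hP.1 p)
        (Real.rpow_nonneg (mul_pos (hapos p.1) (hbpos p.2)).le _))
      ⟨p₀, Finset.mem_univ _, mul_pos hp₀
        (Real.rpow_pos_of_pos (mul_pos (hapos p₀.1) (hbpos p₀.2)) _)⟩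
  set Za := ∑ x, a x ^ (1+ρ) with hZa
  set Zb := ∑ y, b y ^ (1+ρ) with hZb
  have hZapos : 0 < Za :=
    Finset.sum_pos (fun x _ => Real.rpow_pos_of_pos (hapos x) _) Finset.univ_nonempty
  have hZbpos : 0 < Zb :=
    Finset.sum_pos (fun y _ => Real.rpow_pos_of_pos (hbpos y) _) Finset.univ_nonempty
  set ah : X → ℝ := fun x => a x ^ (1+ρ) / Za with hah
  set bh : Y → ℝ := fun y => b y ^ (1+ρ) / Zb with hbh
  have hahpos : ∀ x, 0 < ah x := fun x => div_pos (Real.rpow_pos_of_pos (hapos x) _) hZapos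
  have hbhpos : ∀ y, 0 < bh y := fun y => div_pos (Real.rpow_pos_of_pos (hbpos y) _) hZbpos
  have hahpmf : IsPMF ah := ⟨fun x => (hahpos x).le, by
    rw [hah, ← Finset.sum_div, ← hZa, div_self hZapos.ne']⟩
  have hbhpmf : IsPMF bh := ⟨fun y => (hbhpos y).le, by
    rw [hbh, ← Finset.sum_div, ← hZb, div_self hZbpos.ne']⟩
  -- pointwise identities
  have hprodpt : ∀ (x : X) (y : Y), ah x * bh y = (a x * b y) ^ (1+ρ) / (Za * Zb) := by
    intro x y
    rw [Real.mul_rpow (hapos x).le (hbpos y).le, hah, hbh]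
    field_simp
  have hZZpos : 0 < Za * Zb := mul_pos hZapos hZbpos
  have hA1pt : ∀ p : X × Y, P p * (ah p.1 * bh p.2) ^ (α - 1)
      = (Za * Zb) ^ (ρ/(1+ρ)) * (P p * (a p.1 * b p.2) ^ (-ρ)) := by
    intro p
    have hab : (0:ℝ) ≤ a p.1 * b p.2 := (mul_pos (hapos p.1) (hbpos p.2)).le
    rw [hprodpt p.1 p.2, Real.div_rpow (Real.rpow_nonneg hab _) hZZpos.le,
      ← Real.rpow_mul hab]
    have e1 : (1+ρ) * (α - 1) = -ρ := by rw [mul_sub, hα', mul_one]; ring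
    have e2 : (Za*Zb) ^ (α - 1) = ((Za*Zb) ^ (ρ/(1+ρ)))⁻¹ := by
      rw [← Real.rpow_neg hZZpos.le]
      congr 1
      field_simp [hα]
      linarith [hα']
    rw [e1, e2, div_eq_mul_inv, inv_inv]
    ring
  have hA2pt : ∀ p : X × Y, (ah p.1 * bh p.2) ^ α
      = ((Za*Zb) ^ (α))⁻¹ * (a p.1 * b p.2) := by
    intro p
    have hab : (0:ℝ) ≤ a p.1 * b p.2 := (mul_pos (hapos p.1) (hbpos p.2)).le
    rw [hprodpt p.1 p.2, Real.div_rpow (Real.rpow_nonneg hab _) hZZpos.le,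
      ← Real.rpow_mul hab]
    rw [hα', Real.rpow_one, div_eq_inv_mul]
  -- the two sums
  have hA1 : ∑ p : X × Y, P p * (ah p.1 * bh p.2) ^ (α - 1) = (Za*Zb) ^ (ρ/(1+ρ)) * S := by
    rw [hS, Finset.mul_sum]
    exact Finset.sum_congr rfl fun p _ => hA1pt p
  have hA2 : ∑ p : X × Y, (ah p.1 * bh p.2) ^ α = ((Za*Zb) ^ α)⁻¹ := by
    calc ∑ p : X × Y, (ah p.1 * bh p.2) ^ α
        = ∑ p : X × Y, ((Za*Zb) ^ α)⁻¹ * (a p.1 * b p.2) :=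
          Finset.sum_congr rfl fun p _ => hA2pt p
      _ = ((Za*Zb) ^ α)⁻¹ * ∑ p : X × Y, a p.1 * b p.2 := by rw [← Finset.mul_sum]
      _ = ((Za*Zb) ^ α)⁻¹ := by
          rw [Fintype.sum_prod_type]
          simp only [← Finset.sum_mul, ← Finset.mul_sum, ha.2, hb.2, one_mul, mul_one]
  -- membership and lower bound
  have hmem : relAlphaEntropy α P (fun p => ah p.1 * bh p.2) ∈
      {r : ℝ | ∃ QX : X → ℝ, ∃ QY : Y → ℝ, IsPMF QX ∧ IsPMF QY ∧
        (∀ x, 0 < QX x) ∧ (∀ y, 0 < QY y) ∧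
        r = relAlphaEntropy α P (fun p => QX p.1 * QY p.2)} :=
    ⟨ah, bh, hahpmf, hbhpmf, hahpos, hbhpos, rfl⟩
  have hbdd : BddBelow {r : ℝ | ∃ QX : X → ℝ, ∃ QY : Y → ℝ, IsPMF QX ∧ IsPMF QY ∧
      (∀ x, 0 < QX x) ∧ (∀ y, 0 < QY y) ∧
      r = relAlphaEntropy α P (fun p => QX p.1 * QY p.2)} := by
    refine ⟨0, fun r hr => ?_⟩
    obtain ⟨QX, QY, hQX, hQY, hQXpos, hQYpos, rfl⟩ := hr
    exact relAlpha_nonneg hα0 hα1 hP (fun p => mul_pos (hQXpos p.1) (hQYpos p.2))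
  have hK : Kdep α P ≤ relAlphaEntropy α P (fun p => ah p.1 * bh p.2) := csInf_le hbdd hmem
  -- the identity
  have hident : relAlphaEntropy α P (fun p => ah p.1 * bh p.2)
      = (1/ρ) * Real.logb 2 S - renyiEntropy α P := by
    unfold relAlphaEntropy renyiEntropy
    rw [hA1, hA2]
    rw [Real.logb_mul (Real.rpow_pos_of_pos hZZpos _).ne' hSpos.ne',
      Real.logb_rpow_eq_mul_logb_of_pos hZZpos,
      Real.logb_inv, Real.logb_rpow_eq_mul_logb_of_pos hZZpos]
    have hαfrac : α / (1 - α) = 1/ρ := by rw [hα]; field_simp; try ring; exact mul_inv_cancel₀ hρ.ne'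
    rw [hαfrac, hα]
    field_simp
    try ring
  rw [hident] at hK
  have hexp : ρ * (renyiEntropy α P + Kdep α P) ≤ Real.logb 2 S := by
    have := mul_le_mul_of_nonneg_left hK hρ.le
    have e : ρ * ((1/ρ) * Real.logb 2 S - renyiEntropy α P)
        = Real.logb 2 S - ρ * renyiEntropy α P := by field_simp
    rw [e] at this
    linarith
  calc (2:ℝ) ^ (ρ * (renyiEntropy α P + Kdep α P))
      ≤ (2:ℝ) ^ (Real.logb 2 S) := Real.rpow_le_rpow_of_exponent_le one_le_two hexp
    _ = S := Real.rpow_logb two_pos (by norm_num) hSpos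

/-- splitting a sum over `Fin (n+1) → X` as a double sum via `Fin.cons`. -/
lemma sum_cons_split {X : Type*} [Fintype X] {n : ℕ} (h : (Fin (n+1) → X) → ℝ) :
    ∑ w, h w = ∑ x0 : X, ∑ u : Fin n → X, h (Fin.cons x0 u) := by
  rw [← (Fin.consEquiv (fun _ : Fin (n+1) => X)).sum_comp h, Fintype.sum_prod_type]
  rfl

lemma ind3 {X Y : Type*} [Fintype X] [Fintype Y] [Nonempty X] [Nonempty Y]
    {ρ : ℝ} (c : ℝ) (hc : 0 ≤ c) (P : X × Y → ℝ) (hP0 : ∀ p, 0 ≤ P p)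
    (hsingle : ∀ (a : X → ℝ) (b : Y → ℝ), IsPMF a → IsPMF b → (∀ x, 0 < a x) → (∀ y, 0 < b y) →
      c ≤ ∑ p : X × Y, P p * (a p.1 * b p.2) ^ (-ρ)) :
    ∀ (n : ℕ) (Q : (Fin n → X) → ℝ) (R : (Fin n → Y) → ℝ), IsPMF Q → IsPMF R →
      (∀ u, 0 < Q u) → (∀ v, 0 < R v) →
      c ^ n ≤ ∑ p : (Fin n → X) × (Fin n → Y), (∏ i, P (p.1 i, p.2 i)) * (Q p.1 * R p.2) ^ (-ρ) := by
  intro n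
  induction n with
  | zero =>
    intro Q R hQ hR hQpos hRpos
    have hQ1 : Q default = 1 := by
      have := hQ.2; rwa [Fintype.sum_unique] at this
    have hR1 : R default = 1 := by
      have := hR.2; rwa [Fintype.sum_unique] at this
    simp only [Fintype.sum_prod_type, Fintype.sum_unique, pow_zero]
    simp [hQ1, hR1]
  | succ n ih =>
    intro Q R hQ hR hQpos hRpos
    set Q' : (Fin n → X) → ℝ := fun u => ∑ x0, Q (Fin.cons x0 u) with hQ'
    set R' : (Fin n → Y) → ℝ := fun v => ∑ y0, R (Fin.cons y0 v) with hR'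
    have hQ'pos : ∀ u, 0 < Q' u := fun u =>
      Finset.sum_pos (fun x0 _ => hQpos _) Finset.univ_nonempty
    have hR'pos : ∀ v, 0 < R' v := fun v =>
      Finset.sum_pos (fun y0 _ => hRpos _) Finset.univ_nonempty
    have hQ'pmf : IsPMF Q' := by
      refine ⟨fun u => (hQ'pos u).le, ?_⟩
      rw [Finset.sum_comm]
      rw [← sum_cons_split Q]  -- careful : orientation
      exact hQ.2
    have hR'pmf : IsPMF R' := by
      refine ⟨fun v => (hR'pos v).le, ?_⟩
      rw [Finset.sum_comm]
      rw [← sum_cons_split R]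
      exact hR.2
    set a : (Fin n → X) → X → ℝ := fun u x0 => Q (Fin.cons x0 u) / Q' u with ha
    set b : (Fin n → Y) → Y → ℝ := fun v y0 => R (Fin.cons y0 v) / R' v with hb
    have hapos : ∀ u x0, 0 < a u x0 := fun u x0 => div_pos (hQpos _) (hQ'pos u)
    have hbpos : ∀ v y0, 0 < b v y0 := fun v y0 => div_pos (hRpos _) (hR'pos v)
    have hapmf : ∀ u, IsPMF (a u) := fun u =>
      ⟨fun x0 => (hapos u x0).le, by
        rw [ha]; rw [← Finset.sum_div]; exact div_self (hQ'pos u).ne'⟩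
    have hbpmf : ∀ v, IsPMF (b v) := fun v =>
      ⟨fun y0 => (hbpos v y0).le, by
        rw [hb]; rw [← Finset.sum_div]; exact div_self (hR'pos v).ne'⟩
    -- the big reindexing equivalence
    set e : (((Fin n → X) × (Fin n → Y)) × (X × Y)) ≃ ((Fin (n+1) → X) × (Fin (n+1) → Y)) :=
      { toFun := fun q => (Fin.cons q.2.1 q.1.1, Fin.cons q.2.2 q.1.2)
        invFun := fun p => ((Fin.tail p.1, Fin.tail p.2), (p.1 0, p.2 0))
        left_inv := fun q => by simp [Fin.tail_cons, Fin.cons_zero]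
        right_inv := fun p => by simp [Fin.cons_self_tail] } with he
    have hsum := (Equiv.sum_comp e (fun p : (Fin (n+1) → X) × (Fin (n+1) → Y) =>
      (∏ i, P (p.1 i, p.2 i)) * (Q p.1 * R p.2) ^ (-ρ))).symm
    rw [hsum, Fintype.sum_prod_type]
    have hpt : ∀ (r : (Fin n → X) × (Fin n → Y)) (s : X × Y),
        (∏ i : Fin (n+1), P ((Fin.cons s.1 r.1 : Fin (n+1) → X) i,
            (Fin.cons s.2 r.2 : Fin (n+1) → Y) i))
          * (Q (Fin.cons s.1 r.1) * R (Fin.cons s.2 r.2)) ^ (-ρ)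
        = ((∏ i : Fin n, P (r.1 i, r.2 i)) * (Q' r.1 * R' r.2) ^ (-ρ))
          * (P s * (a r.1 s.1 * b r.2 s.2) ^ (-ρ)) := by
      intro r s
      have hQc : Q (Fin.cons s.1 r.1) = Q' r.1 * a r.1 s.1 := by
        rw [ha]
        rw [mul_comm, div_mul_cancel₀ _ (hQ'pos r.1).ne']
      have hRc : R (Fin.cons s.2 r.2) = R' r.2 * b r.2 s.2 := by
        rw [hb]
        rw [mul_comm, div_mul_cancel₀ _ (hR'pos r.2).ne']
      rw [Fin.prod_univ_succ]
      simp only [Fin.cons_zero, Fin.cons_succ]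
      rw [hQc, hRc, mul_mul_mul_comm (Q' r.1) (a r.1 s.1),
        Real.mul_rpow (mul_pos (hQ'pos r.1) (hR'pos r.2)).le
          (mul_pos (hapos r.1 s.1) (hbpos r.2 s.2)).le]
      ring
    have hre : ∀ r : (Fin n → X) × (Fin n → Y),
        (∑ s : X × Y, (∏ i : Fin (n+1), P ((Fin.cons s.1 r.1 : Fin (n+1) → X) i,
            (Fin.cons s.2 r.2 : Fin (n+1) → Y) i))
          * (Q (Fin.cons s.1 r.1) * R (Fin.cons s.2 r.2)) ^ (-ρ))
        = ((∏ i : Fin n, P (r.1 i, r.2 i)) * (Q' r.1 * R' r.2) ^ (-ρ))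
          * (∑ s : X × Y, P s * (a r.1 s.1 * b r.2 s.2) ^ (-ρ)) := by
      intro r
      rw [Finset.mul_sum]
      exact Finset.sum_congr rfl fun s _ => hpt r s
    calc c ^ (n+1) = c ^ n * c := by ring
      _ ≤ (∑ r : (Fin n → X) × (Fin n → Y),
            (∏ i : Fin n, P (r.1 i, r.2 i)) * (Q' r.1 * R' r.2) ^ (-ρ)) * c :=
          mul_le_mul_of_nonneg_right (ih Q' R' hQ'pmf hR'pmf hQ'pos hR'pos) hc
      _ = ∑ r : (Fin n → X) × (Fin n → Y),
            ((∏ i : Fin n, P (r.1 i, r.2 i)) * (Q' r.1 * R' r.2) ^ (-ρ)) * c := by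
          rw [Finset.sum_mul]
      _ ≤ ∑ r : (Fin n → X) × (Fin n → Y),
            ((∏ i : Fin n, P (r.1 i, r.2 i)) * (Q' r.1 * R' r.2) ^ (-ρ))
              * (∑ s : X × Y, P s * (a r.1 s.1 * b r.2 s.2) ^ (-ρ)) := by
          refine Finset.sum_le_sum fun r _ => mul_le_mul_of_nonneg_left
            (hsingle (a r.1) (b r.2) (hapmf r.1) (hbpmf r.2) (hapos r.1) (hbpos r.2))
            (mul_nonneg (Finset.prod_nonneg fun i _ => hP0 _) (Real.rpow_nonneg
              (mul_pos (hQ'pos r.1) (hR'pos r.2)).le _))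
      _ = ∑ r : (Fin n → X) × (Fin n → Y), ∑ s : X × Y,
            (∏ i : Fin (n+1), P ((Fin.cons s.1 r.1 : Fin (n+1) → X) i,
              (Fin.cons s.2 r.2 : Fin (n+1) → Y) i))
            * (Q (Fin.cons s.1 r.1) * R (Fin.cons s.2 r.2)) ^ (-ρ) := by
          exact (Finset.sum_congr rfl fun r _ => (hre r)).symm

/-- From an encoder `f : W → Fin M` we extract a positive PMF `Q` with
`B^(-ρ) * Q w^(-ρ) ≤ (list size of w)^ρ` whenever `M ≤ B`. -/
lemma encoder_decomp {W : Type*} [Fintype W] [Nonempty W] {M : ℕ}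
    (f : W → Fin M) {ρ : ℝ} (hρ : 0 < ρ) {B : ℝ} (hB : 0 < B) (hMB : (M:ℝ) ≤ B) :
    ∃ Q : W → ℝ, IsPMF Q ∧ (∀ w, 0 < Q w) ∧ ∀ w : W,
      B ^ (-ρ) * Q w ^ (-ρ) ≤ ((Finset.univ.filter fun w' => f w' = f w).card : ℝ) ^ ρ := by
  set σ : W → ℝ := fun w => ((Finset.univ.filter fun w' => f w' = f w).card : ℝ) with hσ
  have hσpos : ∀ w, 0 < σ w := by
    intro w
    have hmem : w ∈ Finset.univ.filter fun w' => f w' = f w := by simp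
    exact Nat.cast_pos.mpr (Finset.card_pos.mpr ⟨w, hmem⟩)
  set S : ℝ := ∑ w, (σ w)⁻¹ with hS
  have hSpos : 0 < S :=
    Finset.sum_pos (fun w _ => inv_pos.mpr (hσpos w)) Finset.univ_nonempty
  have hSle : S ≤ (M:ℝ) := by
    have hcomp : S = ∑ m ∈ Finset.univ.image f,
        (Finset.univ.filter fun w' => f w' = m).card •
          ((Finset.univ.filter fun w' => f w' = m).card : ℝ)⁻¹ :=
      Finset.sum_comp (fun m => ((Finset.univ.filter fun w' => f w' = m).card : ℝ)⁻¹) f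
    have hone : ∀ m ∈ Finset.univ.image f,
        (Finset.univ.filter fun w' => f w' = m).card •
          ((Finset.univ.filter fun w' => f w' = m).card : ℝ)⁻¹ = 1 := by
      intro m hm
      obtain ⟨w, _, hw⟩ := Finset.mem_image.mp hm
      have hpos : 0 < (Finset.univ.filter fun w' => f w' = m).card :=
        Finset.card_pos.mpr ⟨w, by simp [hw]⟩
      rw [nsmul_eq_mul, mul_inv_cancel₀ (by exact_mod_cast hpos.ne')]
    have hcard : S = ((Finset.univ.image f).card : ℝ) := by
      rw [hcomp, Finset.sum_congr rfl hone, Finset.sum_const, nsmul_eq_mul, mul_one]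
    rw [hcard]
    calc ((Finset.univ.image f).card : ℝ) ≤ (Fintype.card (Fin M) : ℝ) := by
          exact_mod_cast Finset.card_le_univ _
      _ = (M:ℝ) := by simp
  have hQpos : ∀ w, 0 < (σ w)⁻¹ / S := fun w => div_pos (inv_pos.mpr (hσpos w)) hSpos
  refine ⟨fun w => (σ w)⁻¹ / S, ⟨fun w => (hQpos w).le, ?_⟩, hQpos, ?_⟩
  · rw [← Finset.sum_div, ← hS, div_self hSpos.ne']
  · intro w
    have hQw : 0 < (σ w)⁻¹ / S := hQpos w
    have key : S * ((σ w)⁻¹ / S) = (σ w)⁻¹ := mul_div_cancel₀ _ hSpos.ne'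
    have e1 : ((σ w)⁻¹) ^ (-ρ) = σ w ^ ρ := by
      rw [Real.inv_rpow (hσpos w).le, Real.rpow_neg (hσpos w).le, inv_inv]
    have e2 : (S * ((σ w)⁻¹ / S)) ^ (-ρ) = S ^ (-ρ) * ((σ w)⁻¹ / S) ^ (-ρ) :=
      Real.mul_rpow hSpos.le hQw.le
    have hBS : B ^ (-ρ) ≤ S ^ (-ρ) :=
      Real.rpow_le_rpow_of_nonpos hSpos (hSle.trans hMB) (neg_nonpos.mpr hρ.le)
    calc B ^ (-ρ) * ((σ w)⁻¹ / S) ^ (-ρ) ≤ S ^ (-ρ) * ((σ w)⁻¹ / S) ^ (-ρ) :=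
          mul_le_mul_of_nonneg_right hBS (Real.rpow_nonneg hQw.le _)
      _ = (S * ((σ w)⁻¹ / S)) ^ (-ρ) := e2.symm
      _ = σ w ^ ρ := by rw [key, e1]

lemma single_bound {A : Type*} [Fintype A] [Nonempty A] {M : ℕ} (f : A → Fin M)
    {ρ : ℝ} (hρ : 0 < ρ) (μ : A → ℝ) (hμ0 : ∀ a, 0 ≤ μ a)
    {B : ℝ} (hB : 0 < B) (hMB : (M:ℝ) ≤ B) :
    B ^ (-ρ) * (∑ a, μ a ^ (1/(1+ρ))) ^ (1+ρ)
      ≤ ∑ a, μ a * ((Finset.univ.filter fun a' => f a' = f a).card : ℝ) ^ ρ := by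
  obtain ⟨Q, hQpmf, hQpos, hQb⟩ := encoder_decomp f hρ hB hMB
  calc B ^ (-ρ) * (∑ a, μ a ^ (1/(1+ρ))) ^ (1+ρ)
      ≤ B ^ (-ρ) * ∑ a, μ a * Q a ^ (-ρ) :=
        mul_le_mul_of_nonneg_left (holder_pmf hρ μ Q hμ0 hQpos hQpmf.2)
          (Real.rpow_nonneg hB.le _)
    _ = ∑ a, μ a * (B ^ (-ρ) * Q a ^ (-ρ)) := by
        rw [Finset.mul_sum]; exact Finset.sum_congr rfl fun a _ => by ring
    _ ≤ ∑ a, μ a * ((Finset.univ.filter fun a' => f a' = f a).card : ℝ) ^ ρ :=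
        Finset.sum_le_sum fun a _ => mul_le_mul_of_nonneg_left (hQb a) (hμ0 a)

lemma tendsto_bound {E : ℕ → ℝ} {θ : ℝ} (hE : Filter.Tendsto E atTop (nhds 1))
    (hb : ∀ n, θ ^ n ≤ E n) : θ ≤ 1 := by
  by_contra h
  push_neg at h
  exact not_tendsto_nhds_of_tendsto_atTop
    (tendsto_atTop_mono hb (tendsto_pow_atTop_atTop_of_one_lt h)) 1 hE

/-- converse, IID case: if there are encoders
`f_n : X^n → {1,…,⌊2^{nR_X}⌋}` and `g_n : Y^n → {1,…,⌊2^{nR_Y}⌋}` whose `ρ`-th moment of the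
joint list size (under the `n`-fold product of `P_{XY}`) tends to `1`, then
`R_X ≥ H_{ρ̃}(P_X)`, `R_Y ≥ H_{ρ̃}(P_Y)` and `R_X + R_Y ≥ H_{ρ̃}(P_{XY}) + K_{ρ̃}(X;Y)`,
where `ρ̃ = 1/(1+ρ)`. -/
theorem distributed_task_encoding_converse_iid
    {X Y : Type*} [Fintype X] [Fintype Y]
    (ρ : ℝ) (hρ : 0 < ρ) (P : X × Y → ℝ) (hP : IsPMF P)
    (RX RY : ℝ) (hRX : 0 ≤ RX) (hRY : 0 ≤ RY)
    (F : ∀ n : ℕ, (Fin n → X) → Fin ⌊(2 : ℝ) ^ ((n : ℝ) * RX)⌋₊)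
    (G : ∀ n : ℕ, (Fin n → Y) → Fin ⌊(2 : ℝ) ^ ((n : ℝ) * RY)⌋₊)
    (hconv : Tendsto
      (fun n : ℕ => ∑ p : (Fin n → X) × (Fin n → Y),
        (∏ i, P (p.1 i, p.2 i)) * (jointListSize (F n) (G n) p.1 p.2 : ℝ) ^ ρ)
      atTop (nhds 1)) :
    RX ≥ renyiEntropy (1 / (1 + ρ)) (fun x => ∑ y, P (x, y)) ∧
    RY ≥ renyiEntropy (1 / (1 + ρ)) (fun y => ∑ x, P (x, y)) ∧
    RX + RY ≥ renyiEntropy (1 / (1 + ρ)) P + Kdep (1 / (1 + ρ)) P := by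
  have h1ρ : (0:ℝ) < 1 + ρ := by linarith
  have hα0 : 0 < 1/(1+ρ) := by positivity
  have hα1 : 1/(1+ρ) < 1 := by rw [div_lt_one h1ρ]; linarith
  obtain ⟨p₀, hp₀⟩ := hP.exists_pos
  haveI hXne : Nonempty X := ⟨p₀.1⟩
  haveI hYne : Nonempty Y := ⟨p₀.2⟩
  set PX : X → ℝ := fun x => ∑ y, P (x,y) with hPX
  set PY : Y → ℝ := fun y => ∑ x, P (x,y) with hPY
  have hPXpmf : IsPMF PX := by
    refine ⟨fun x => Finset.sum_nonneg fun y _ => hP.1 _, ?_⟩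
    rw [hPX, ← Fintype.sum_prod_type]
    exact hP.2
  have hPYpmf : IsPMF PY := by
    refine ⟨fun y => Finset.sum_nonneg fun x _ => hP.1 _, ?_⟩
    rw [hPY, ← Fintype.sum_prod_type_right]
    exact hP.2
  set DX := ∑ x, PX x ^ (1/(1+ρ)) with hDX
  set DY := ∑ y, PY y ^ (1/(1+ρ)) with hDY
  have hDXpos : 0 < DX := sum_rpow_pos hPXpmf _ hα0
  have hDYpos : 0 < DY := sum_rpow_pos hPYpmf _ hα0
  set HK := renyiEntropy (1/(1+ρ)) P + Kdep (1/(1+ρ)) P with hHK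
  set c := (2:ℝ) ^ (ρ * HK) with hc
  have hcpos : 0 < c := Real.rpow_pos_of_pos two_pos _
  -- the three per-n bounds
  have keys : ∀ n : ℕ,
      ((2:ℝ)^(-(ρ*RX)) * DX^(1+ρ)) ^ n
          ≤ (∑ p : (Fin n → X) × (Fin n → Y),
              (∏ i, P (p.1 i, p.2 i)) * (jointListSize (F n) (G n) p.1 p.2 : ℝ) ^ ρ) ∧
      ((2:ℝ)^(-(ρ*RY)) * DY^(1+ρ)) ^ n
          ≤ (∑ p : (Fin n → X) × (Fin n → Y),
              (∏ i, P (p.1 i, p.2 i)) * (jointListSize (F n) (G n) p.1 p.2 : ℝ) ^ ρ) ∧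
      ((2:ℝ)^(ρ*HK - ρ*(RX+RY))) ^ n
          ≤ (∑ p : (Fin n → X) × (Fin n → Y),
              (∏ i, P (p.1 i, p.2 i)) * (jointListSize (F n) (G n) p.1 p.2 : ℝ) ^ ρ) := by
    intro n
    set BX : ℝ := (2:ℝ) ^ ((n:ℝ) * RX) with hBX
    set BY : ℝ := (2:ℝ) ^ ((n:ℝ) * RY) with hBY
    have hBXpos : 0 < BX := Real.rpow_pos_of_pos two_pos _
    have hBYpos : 0 < BY := Real.rpow_pos_of_pos two_pos _
    have hMBX : ((⌊BX⌋₊ : ℕ) : ℝ) ≤ BX := Nat.floor_le hBXpos.le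
    have hMBY : ((⌊BY⌋₊ : ℕ) : ℝ) ≤ BY := Nat.floor_le hBYpos.le
    set f := F n with hf
    set g := G n with hg
    set σ : (Fin n → X) → ℝ :=
      fun x => ((Finset.univ.filter fun x' => f x' = f x).card : ℝ) with hσ
    set τ : (Fin n → Y) → ℝ :=
      fun y => ((Finset.univ.filter fun y' => g y' = g y).card : ℝ) with hτ
    have hσ1 : ∀ x, 1 ≤ σ x := by
      intro x
      have hmem : x ∈ Finset.univ.filter fun x' => f x' = f x := by simp
      exact_mod_cast Nat.one_le_cast.mpr (Finset.card_pos.mpr ⟨x, hmem⟩)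
    have hτ1 : ∀ y, 1 ≤ τ y := by
      intro y
      have hmem : y ∈ Finset.univ.filter fun y' => g y' = g y := by simp
      exact_mod_cast Nat.one_le_cast.mpr (Finset.card_pos.mpr ⟨y, hmem⟩)
    have hσ0 : ∀ x, 0 ≤ σ x := fun x => le_trans zero_le_one (hσ1 x)
    have hτ0 : ∀ y, 0 ≤ τ y := fun y => le_trans zero_le_one (hτ1 y)
    have hjoint : ∀ p : (Fin n → X) × (Fin n → Y),
        (jointListSize f g p.1 p.2 : ℝ) = σ p.1 * τ p.2 := by
      intro p
      unfold jointListSize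
      have hsplit : Finset.univ.filter
            (fun q : (Fin n → X) × (Fin n → Y) => f q.1 = f p.1 ∧ g q.2 = g p.2)
          = (Finset.univ.filter fun x' => f x' = f p.1) ×ˢ
            (Finset.univ.filter fun y' => g y' = g p.2) := by
        ext q
        simp [Finset.mem_filter, Finset.mem_product]
      rw [hsplit, Finset.card_product]
      push_cast
      rfl
    have hPi0 : ∀ p : (Fin n → X) × (Fin n → Y), 0 ≤ ∏ i, P (p.1 i, p.2 i) :=
      fun p => Finset.prod_nonneg fun i _ => hP.1 _
    -- rewrite the target sum
    have hE : (∑ p : (Fin n → X) × (Fin n → Y),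
          (∏ i, P (p.1 i, p.2 i)) * (jointListSize (F n) (G n) p.1 p.2 : ℝ) ^ ρ)
        = ∑ p : (Fin n → X) × (Fin n → Y),
          (∏ i, P (p.1 i, p.2 i)) * (σ p.1 ^ ρ * τ p.2 ^ ρ) := by
      refine Finset.sum_congr rfl fun p _ => ?_
      rw [hjoint p, Real.mul_rpow (hσ0 p.1) (hτ0 p.2)]
    rw [hE]
    have hτρ1 : ∀ y, 1 ≤ τ y ^ ρ := by
      intro y
      calc (1:ℝ) = 1 ^ ρ := (Real.one_rpow ρ).symm
        _ ≤ τ y ^ ρ := Real.rpow_le_rpow zero_le_one (hτ1 y) hρ.le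
    have hσρ1 : ∀ x, 1 ≤ σ x ^ ρ := by
      intro x
      calc (1:ℝ) = 1 ^ ρ := (Real.one_rpow ρ).symm
        _ ≤ σ x ^ ρ := Real.rpow_le_rpow zero_le_one (hσ1 x) hρ.le
    -- marginal sums
    have hmargX : ∀ x : Fin n → X, ∑ y : Fin n → Y, ∏ i, P (x i, y i) = ∏ i, PX (x i) :=
      fun x => (Fintype.prod_sum fun i (w : Y) => P (x i, w)).symm
    have hmargY : ∀ y : Fin n → Y, ∑ x : Fin n → X, ∏ i, P (x i, y i) = ∏ i, PY (y i) :=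
      fun y => (Fintype.prod_sum fun i (w : X) => P (w, y i)).symm
    refine ⟨?_, ?_, ?_⟩
    -- STATEMENT 1 bound
    · have step1 : ∑ x : Fin n → X, (∏ i, PX (x i)) * σ x ^ ρ
          ≤ ∑ p : (Fin n → X) × (Fin n → Y),
            (∏ i, P (p.1 i, p.2 i)) * (σ p.1 ^ ρ * τ p.2 ^ ρ) := by
        rw [Fintype.sum_prod_type]
        refine Finset.sum_le_sum fun x _ => ?_
        calc (∏ i, PX (x i)) * σ x ^ ρ
            = ∑ y : Fin n → Y, (∏ i, P (x i, y i)) * σ x ^ ρ := by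
              rw [← Finset.sum_mul, hmargX x]
          _ ≤ ∑ y : Fin n → Y, (∏ i, P (x i, y i)) * (σ x ^ ρ * τ y ^ ρ) := by
              refine Finset.sum_le_sum fun y _ => ?_
              refine mul_le_mul_of_nonneg_left ?_ (hPi0 (x, y))
              exact le_mul_of_one_le_right (Real.rpow_nonneg (hσ0 x) _) (hτρ1 y)
      have step2 : BX ^ (-ρ) * (∑ x : Fin n → X, (∏ i, PX (x i)) ^ (1/(1+ρ))) ^ (1+ρ)
          ≤ ∑ x : Fin n → X, (∏ i, PX (x i)) * σ x ^ ρ := by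
        simp only [hσ]
        exact single_bound f hρ (fun x => ∏ i, PX (x i))
          (fun x => Finset.prod_nonneg fun i _ => hPXpmf.1 _) hBXpos hMBX
      have hsumX : ∑ x : Fin n → X, (∏ i, PX (x i)) ^ (1/(1+ρ)) = DX ^ n := by
        have e : ∀ x : Fin n → X, (∏ i, PX (x i)) ^ (1/(1+ρ)) = ∏ i, PX (x i) ^ (1/(1+ρ)) :=
          fun x => (Real.finset_prod_rpow Finset.univ (fun i => PX (x i))
            (fun i _ => hPXpmf.1 _) _).symm
        rw [Finset.sum_congr rfl fun x _ => e x, ← Fintype.prod_sum fun (i : Fin n) (w : X) => PX w ^ (1/(1+ρ)), ← hDX,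
          Finset.prod_const, Finset.card_univ, Fintype.card_fin]
      have hpow : BX ^ (-ρ) * (DX ^ n) ^ (1+ρ) = ((2:ℝ)^(-(ρ*RX)) * DX^(1+ρ)) ^ n := by
        have e1 : BX ^ (-ρ) = ((2:ℝ)^(-(ρ*RX))) ^ n := by
          rw [hBX, ← Real.rpow_natCast ((2:ℝ)^(-(ρ*RX))) n, ← Real.rpow_mul (by norm_num),
            ← Real.rpow_mul (by norm_num)]
          congr 1
          ring
        have e2 : ((DX:ℝ) ^ n) ^ (1+ρ) = (DX^(1+ρ)) ^ n := by
          rw [← Real.rpow_natCast DX n, ← Real.rpow_natCast (DX^(1+ρ)) n,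
            ← Real.rpow_mul hDXpos.le, ← Real.rpow_mul hDXpos.le]
          congr 1
          ring
        rw [e1, e2, ← mul_pow]
      calc ((2:ℝ)^(-(ρ*RX)) * DX^(1+ρ)) ^ n
          = BX ^ (-ρ) * (DX ^ n) ^ (1+ρ) := hpow.symm
        _ = BX ^ (-ρ) * (∑ x : Fin n → X, (∏ i, PX (x i)) ^ (1/(1+ρ))) ^ (1+ρ) := by
            rw [hsumX]
        _ ≤ ∑ x : Fin n → X, (∏ i, PX (x i)) * σ x ^ ρ := step2
        _ ≤ _ := step1
    -- STATEMENT 2 bound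
    · have step1 : ∑ y : Fin n → Y, (∏ i, PY (y i)) * τ y ^ ρ
          ≤ ∑ p : (Fin n → X) × (Fin n → Y),
            (∏ i, P (p.1 i, p.2 i)) * (σ p.1 ^ ρ * τ p.2 ^ ρ) := by
        rw [Fintype.sum_prod_type_right]
        refine Finset.sum_le_sum fun y _ => ?_
        calc (∏ i, PY (y i)) * τ y ^ ρ
            = ∑ x : Fin n → X, (∏ i, P (x i, y i)) * τ y ^ ρ := by
              rw [← Finset.sum_mul, hmargY y]
          _ ≤ ∑ x : Fin n → X, (∏ i, P (x i, y i)) * (σ x ^ ρ * τ y ^ ρ) := by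
              refine Finset.sum_le_sum fun x _ => ?_
              refine mul_le_mul_of_nonneg_left ?_ (hPi0 (x, y))
              exact le_mul_of_one_le_left (Real.rpow_nonneg (hτ0 y) _) (hσρ1 x)
      have step2 : BY ^ (-ρ) * (∑ y : Fin n → Y, (∏ i, PY (y i)) ^ (1/(1+ρ))) ^ (1+ρ)
          ≤ ∑ y : Fin n → Y, (∏ i, PY (y i)) * τ y ^ ρ := by
        simp only [hτ]
        exact single_bound g hρ (fun y => ∏ i, PY (y i))
          (fun y => Finset.prod_nonneg fun i _ => hPYpmf.1 _) hBYpos hMBY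
      have hsumY : ∑ y : Fin n → Y, (∏ i, PY (y i)) ^ (1/(1+ρ)) = DY ^ n := by
        have e : ∀ y : Fin n → Y, (∏ i, PY (y i)) ^ (1/(1+ρ)) = ∏ i, PY (y i) ^ (1/(1+ρ)) :=
          fun y => (Real.finset_prod_rpow Finset.univ (fun i => PY (y i))
            (fun i _ => hPYpmf.1 _) _).symm
        rw [Finset.sum_congr rfl fun y _ => e y, ← Fintype.prod_sum fun (i : Fin n) (w : Y) => PY w ^ (1/(1+ρ)), ← hDY,
          Finset.prod_const, Finset.card_univ, Fintype.card_fin]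
      have hpow : BY ^ (-ρ) * (DY ^ n) ^ (1+ρ) = ((2:ℝ)^(-(ρ*RY)) * DY^(1+ρ)) ^ n := by
        have e1 : BY ^ (-ρ) = ((2:ℝ)^(-(ρ*RY))) ^ n := by
          rw [hBY, ← Real.rpow_natCast ((2:ℝ)^(-(ρ*RY))) n, ← Real.rpow_mul (by norm_num),
            ← Real.rpow_mul (by norm_num)]
          congr 1
          ring
        have e2 : ((DY:ℝ) ^ n) ^ (1+ρ) = (DY^(1+ρ)) ^ n := by
          rw [← Real.rpow_natCast DY n, ← Real.rpow_natCast (DY^(1+ρ)) n,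
            ← Real.rpow_mul hDYpos.le, ← Real.rpow_mul hDYpos.le]
          congr 1
          ring
        rw [e1, e2, ← mul_pow]
      calc ((2:ℝ)^(-(ρ*RY)) * DY^(1+ρ)) ^ n
          = BY ^ (-ρ) * (DY ^ n) ^ (1+ρ) := hpow.symm
        _ = BY ^ (-ρ) * (∑ y : Fin n → Y, (∏ i, PY (y i)) ^ (1/(1+ρ))) ^ (1+ρ) := by
            rw [hsumY]
        _ ≤ ∑ y : Fin n → Y, (∏ i, PY (y i)) * τ y ^ ρ := step2
        _ ≤ _ := step1
    -- STATEMENT 3 bound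
    · obtain ⟨QX, hQXpmf, hQXpos, hQXb⟩ := encoder_decomp f hρ hBXpos hMBX
      obtain ⟨QY, hQYpmf, hQYpos, hQYb⟩ := encoder_decomp g hρ hBYpos hMBY
      have hT := ind3 c hcpos.le P hP.1
        (fun a b ha hb hap hbp => Kdep_le_aux hρ hP a b ha hb hap hbp)
        n QX QY hQXpmf hQYpmf hQXpos hQYpos
      have step1 : ∑ p : (Fin n → X) × (Fin n → Y),
            (∏ i, P (p.1 i, p.2 i)) * ((BX ^ (-ρ) * QX p.1 ^ (-ρ)) * (BY ^ (-ρ) * QY p.2 ^ (-ρ)))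
          ≤ ∑ p : (Fin n → X) × (Fin n → Y),
            (∏ i, P (p.1 i, p.2 i)) * (σ p.1 ^ ρ * τ p.2 ^ ρ) := by
        refine Finset.sum_le_sum fun p _ => mul_le_mul_of_nonneg_left ?_ (hPi0 p)
        simp only [hσ, hτ]
        exact mul_le_mul (hQXb p.1) (hQYb p.2)
          (mul_nonneg (Real.rpow_nonneg hBYpos.le _)
            (Real.rpow_nonneg (hQYpos p.2).le _))
          (Real.rpow_nonneg (hσ0 p.1) _)
      have step2 : ∑ p : (Fin n → X) × (Fin n → Y),
            (∏ i, P (p.1 i, p.2 i)) * ((BX ^ (-ρ) * QX p.1 ^ (-ρ)) * (BY ^ (-ρ) * QY p.2 ^ (-ρ)))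
          = BX ^ (-ρ) * BY ^ (-ρ) * ∑ p : (Fin n → X) × (Fin n → Y),
            (∏ i, P (p.1 i, p.2 i)) * (QX p.1 * QY p.2) ^ (-ρ) := by
        rw [Finset.mul_sum]
        refine Finset.sum_congr rfl fun p _ => ?_
        rw [Real.mul_rpow (hQXpos p.1).le (hQYpos p.2).le]
        ring
      have hpow : BX ^ (-ρ) * BY ^ (-ρ) * c ^ n = ((2:ℝ)^(ρ*HK - ρ*(RX+RY))) ^ n := by
        rw [hBX, hBY, hc, ← Real.rpow_natCast ((2:ℝ)^(ρ*HK)) n,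
          ← Real.rpow_natCast ((2:ℝ)^(ρ*HK - ρ*(RX+RY))) n,
          ← Real.rpow_mul (by norm_num : (0:ℝ) ≤ 2), ← Real.rpow_mul (by norm_num : (0:ℝ) ≤ 2),
          ← Real.rpow_mul (by norm_num : (0:ℝ) ≤ 2), ← Real.rpow_mul (by norm_num : (0:ℝ) ≤ 2),
          ← Real.rpow_add two_pos, ← Real.rpow_add two_pos]
        congr 1
        ring
      calc ((2:ℝ)^(ρ*HK - ρ*(RX+RY))) ^ n
          = BX ^ (-ρ) * BY ^ (-ρ) * c ^ n := hpow.symm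
        _ ≤ BX ^ (-ρ) * BY ^ (-ρ) * ∑ p : (Fin n → X) × (Fin n → Y),
              (∏ i, P (p.1 i, p.2 i)) * (QX p.1 * QY p.2) ^ (-ρ) := by
            refine mul_le_mul_of_nonneg_left hT ?_
            exact mul_nonneg (Real.rpow_nonneg hBXpos.le _) (Real.rpow_nonneg hBYpos.le _)
        _ = ∑ p : (Fin n → X) × (Fin n → Y),
              (∏ i, P (p.1 i, p.2 i)) * ((BX ^ (-ρ) * QX p.1 ^ (-ρ)) * (BY ^ (-ρ) * QY p.2 ^ (-ρ))) :=
            step2.symm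
        _ ≤ _ := step1
  -- conclude from the limit
  have hθ1 : (2:ℝ)^(-(ρ*RX)) * DX^(1+ρ) ≤ 1 := tendsto_bound hconv fun n => (keys n).1
  have hθ2 : (2:ℝ)^(-(ρ*RY)) * DY^(1+ρ) ≤ 1 := tendsto_bound hconv fun n => (keys n).2.1
  have hθ3 : (2:ℝ)^(ρ*HK - ρ*(RX+RY)) ≤ 1 := tendsto_bound hconv fun n => (keys n).2.2
  have hlog1 : -(ρ*RX) + (1+ρ) * Real.logb 2 DX ≤ 0 := by
    have hpos : 0 < (2:ℝ)^(-(ρ*RX)) * DX^(1+ρ) :=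
      mul_pos (Real.rpow_pos_of_pos two_pos _) (Real.rpow_pos_of_pos hDXpos _)
    have := Real.logb_nonpos one_lt_two hpos.le hθ1
    rw [Real.logb_mul (Real.rpow_pos_of_pos two_pos _).ne' (Real.rpow_pos_of_pos hDXpos _).ne',
      Real.logb_rpow two_pos (by norm_num), Real.logb_rpow_eq_mul_logb_of_pos hDXpos] at this
    linarith
  have hlog2 : -(ρ*RY) + (1+ρ) * Real.logb 2 DY ≤ 0 := by
    have hpos : 0 < (2:ℝ)^(-(ρ*RY)) * DY^(1+ρ) :=
      mul_pos (Real.rpow_pos_of_pos two_pos _) (Real.rpow_pos_of_pos hDYpos _)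
    have := Real.logb_nonpos one_lt_two hpos.le hθ2
    rw [Real.logb_mul (Real.rpow_pos_of_pos two_pos _).ne' (Real.rpow_pos_of_pos hDYpos _).ne',
      Real.logb_rpow two_pos (by norm_num), Real.logb_rpow_eq_mul_logb_of_pos hDYpos] at this
    linarith
  have hfrac : (1 - 1/(1+ρ))⁻¹ = (1+ρ)/ρ := by
    rw [show 1 - 1/(1+ρ) = ρ/(1+ρ) by field_simp; ring, inv_div]
  refine ⟨?_, ?_, ?_⟩
  · show RX ≥ renyiEntropy (1/(1+ρ)) PX
    unfold renyiEntropy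
    rw [← hDX, hfrac, ge_iff_le, div_mul_eq_mul_div, div_le_iff₀ hρ]
    linarith
  · show RY ≥ renyiEntropy (1/(1+ρ)) PY
    unfold renyiEntropy
    rw [← hDY, hfrac, ge_iff_le, div_mul_eq_mul_div, div_le_iff₀ hρ]
    linarith
  · show RX + RY ≥ HK
    have h0 : ρ*HK - ρ*(RX+RY) ≤ 0 := by
      have h1 : (2:ℝ)^(ρ*HK - ρ*(RX+RY)) ≤ (2:ℝ)^(0:ℝ) := by
        rw [Real.rpow_zero]; exact hθ3
      exact (Real.rpow_le_rpow_left_iff one_lt_two).mp h1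
    by_contra h
    push_neg at h
    nlinarith
end
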